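/- arXiv:1002.0345 — 8 statements merged into one kernel-verified Lean document; each statement's English description precedes it below -/
import Mathlib

section
/- Let T be the right triangle with vertices (a,0), (a,b), and (1,0), where 0 ≤ a < 1 and b > 0. Then the average distance from the origin o = (0,0) to the points of T is strictly greater than 1/3. -/
open MeasureTheory Metric Real

noncomputable def Fe : (ℝ × ℝ) ≃ᵐ EuclideanSpace ℝ (Fin 2) :=
  (MeasurableEquiv.piFinTwo fun _ => ℝ).symm.trans (MeasurableEquiv.toLp 2 (Fin 2 → ℝ))

theorem Fe_mp : MeasurePreserving Fe volume volume :=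
  ((EuclideanSpace.volume_preserving_symm_measurableEquiv_toLp (Fin 2)).symm).comp
    ((volume_preserving_piFinTwo fun _ => ℝ).symm (MeasurableEquiv.piFinTwo fun _ => ℝ))

theorem Fe0 (p : ℝ × ℝ) : Fe p 0 = p.1 := by
  simp [Fe, MeasurableEquiv.coe_toLp]

theorem Fe1 (p : ℝ × ℝ) : Fe p 1 = p.2 := by
  simp [Fe, MeasurableEquiv.coe_toLp]

theorem Fe_dist (p : ℝ × ℝ) :
    dist (0 : EuclideanSpace ℝ (Fin 2)) (Fe p) = Real.sqrt (p.1 ^ 2 + p.2 ^ 2) := by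
  rw [dist_comm, dist_zero_right, EuclideanSpace.norm_eq]
  simp [Fin.sum_univ_two, sq_abs, Fe0, Fe1]

def Sr (a b : ℝ) : Set (ℝ × ℝ) :=
  {p | a ≤ p.1 ∧ p.1 ≤ 1 ∧ 0 ≤ p.2 ∧ (1 - a) * p.2 ≤ b * (1 - p.1)}

lemma Sr_closed (a b : ℝ) : IsClosed (Sr a b) := by
  have : Sr a b = {p : ℝ × ℝ | a ≤ p.1} ∩ {p | p.1 ≤ 1} ∩ {p | 0 ≤ p.2} ∩
      {p | (1 - a) * p.2 ≤ b * (1 - p.1)} := by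
    ext p; simp [Sr]; tauto
  rw [this]
  exact (((isClosed_le continuous_const continuous_fst).inter
    (isClosed_le continuous_fst continuous_const)).inter
    (isClosed_le continuous_const continuous_snd)).inter
    (isClosed_le (by fun_prop) (by fun_prop))

lemma Sr_meas (a b : ℝ) : MeasurableSet (Sr a b) := (Sr_closed a b).measurableSet

lemma Sr_compact (a b : ℝ) (ha1 : a < 1) (hb : 0 < b) : IsCompact (Sr a b) := by
  refine ((isCompact_Icc (a := a) (b := 1)).prod
    (isCompact_Icc (a := 0) (b := b))).of_isClosed_subset (Sr_closed a b) ?_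
  rintro ⟨x, y⟩ ⟨h1, h2, h3, h4⟩
  refine ⟨⟨h1, h2⟩, ⟨h3, (?_ : y ≤ b)⟩⟩
  nlinarith

lemma fubini_tri (a b : ℝ) (ha1 : a < 1) (f : ℝ × ℝ → ℝ)
    (hf : IntegrableOn f (Sr a b)) :
    ∫ p in Sr a b, f p =
      ∫ x in Set.Icc a 1, ∫ y in Set.Icc 0 (b * (1 - x) / (1 - a)), f (x, y) := by
  have hc : (0:ℝ) < 1 - a := by linarith
  rw [← integral_indicator (Sr_meas a b)]
  rw [Measure.volume_eq_prod]
  rw [integral_prod _ (by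
    rw [← integrable_indicator_iff (Sr_meas a b)] at hf
    rwa [Measure.volume_eq_prod] at hf)]
  have inner : ∀ x : ℝ, (∫ y, (Sr a b).indicator f (x, y)) =
      (Set.Icc a 1).indicator
        (fun x => ∫ y in Set.Icc 0 (b * (1 - x) / (1 - a)), f (x, y)) x := by
    intro x
    by_cases hx : x ∈ Set.Icc a 1
    · rw [Set.indicator_of_mem hx, ← integral_indicator measurableSet_Icc]
      congr 1
      funext y
      have : (x, y) ∈ Sr a b ↔ y ∈ Set.Icc 0 (b * (1 - x) / (1 - a)) := by
        simp only [Sr, Set.mem_setOf_eq, Set.mem_Icc]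
        constructor
        · rintro ⟨_, _, h3, h4⟩
          exact ⟨h3, by rw [le_div_iff₀ hc]; linarith⟩
        · rintro ⟨h3, h4⟩
          rw [le_div_iff₀ hc] at h4
          exact ⟨hx.1, hx.2, h3, by linarith⟩
      by_cases hy : y ∈ Set.Icc 0 (b * (1 - x) / (1 - a))
      · rw [Set.indicator_of_mem hy, Set.indicator_of_mem (this.2 hy)]
      · rw [Set.indicator_of_notMem hy, Set.indicator_of_notMem (fun h => hy (this.1 h))]
    · rw [Set.indicator_of_notMem hx]
      have : ∀ y : ℝ, (Sr a b).indicator f (x, y) = 0 := by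
        intro y
        apply Set.indicator_of_notMem
        intro h
        exact hx ⟨h.1, h.2.1⟩
      simp [this]
  simp_rw [inner]
  rw [integral_indicator measurableSet_Icc]

lemma hull_eq (a b : ℝ) (ha0 : 0 ≤ a) (ha1 : a < 1) (hb : 0 < b) :
    convexHull ℝ ({!₂[a, 0], !₂[a, b], !₂[1, 0]} : Set (EuclideanSpace ℝ (Fin 2))) =
      {p : EuclideanSpace ℝ (Fin 2) |
        a ≤ p 0 ∧ p 0 ≤ 1 ∧ 0 ≤ p 1 ∧ (1 - a) * p 1 ≤ b * (1 - p 0)} := by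
  have hc : (0:ℝ) < 1 - a := by linarith
  apply le_antisymm
  · apply convexHull_min
    · rintro p (rfl | rfl | rfl) <;>
        simp only [Set.mem_setOf_eq, PiLp.toLp_apply, Matrix.cons_val_zero, Matrix.cons_val_one,
          Matrix.head_cons] <;>
        exact ⟨by linarith, by linarith, by linarith, by nlinarith⟩
    · rintro p ⟨hp1, hp2, hp3, hp4⟩ q ⟨hq1, hq2, hq3, hq4⟩ u v hu hv huv
      have e0 : (u • p + v • q) 0 = u * p 0 + v * q 0 := rfl
      have e1 : (u • p + v • q) 1 = u * p 1 + v * q 1 := rfl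
      simp only [Set.mem_setOf_eq, e0, e1]
      refine ⟨by nlinarith, by nlinarith, by nlinarith, by nlinarith⟩
  · rintro p ⟨hp1, hp2, hp3, hp4⟩
    set x := p 0 with hx
    set y := p 1 with hy
    set w : Fin 3 → ℝ := ![1 - y / b - (x - a) / (1 - a), y / b, (x - a) / (1 - a)] with hw
    set z : Fin 3 → EuclideanSpace ℝ (Fin 2) := ![!₂[a, 0], !₂[a, b], !₂[1, 0]] with hz
    have hw0 : ∀ i ∈ Finset.univ, 0 ≤ w i := by
      intro i _
      fin_cases i
      · show 0 ≤ 1 - y / b - (x - a) / (1 - a)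
        have h1 : y / b ≤ (1 - x) / (1 - a) := by
          rw [div_le_div_iff₀ hb hc]; nlinarith
        have h2 : (1 - x) / (1 - a) + (x - a) / (1 - a) = 1 := by field_simp; ring
        linarith
      · show 0 ≤ y / b
        positivity
      · show 0 ≤ (x - a) / (1 - a)
        exact div_nonneg (by linarith) (le_of_lt hc)
    have hws : ∑ i, w i = 1 := by
      simp only [hw, Fin.sum_univ_three, Matrix.cons_val_zero, Matrix.cons_val_one,
        Matrix.head_cons, Matrix.cons_val_two, Matrix.tail_cons]
      ring
    have hmem : ∀ i ∈ Finset.univ, z i ∈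
        ({!₂[a, 0], !₂[a, b], !₂[1, 0]} : Set (EuclideanSpace ℝ (Fin 2))) := by
      intro i _; fin_cases i <;> simp [hz]
    have hmain := Finset.centerMass_mem_convexHull Finset.univ hw0 (by rw [hws]; norm_num) hmem
    have hcm : Finset.univ.centerMass w z = p := by
      rw [Finset.centerMass, hws, inv_one, one_smul, Fin.sum_univ_three]
      ext j
      fin_cases j <;>
        simp only [hw, hz, Fin.zero_eta, Fin.mk_one, ← hx, ← hy, PiLp.toLp_apply, PiLp.add_apply, PiLp.smul_apply, smul_eq_mul, Matrix.cons_val_zero,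
          Matrix.cons_val_one, Matrix.head_cons, Matrix.cons_val_two, Matrix.tail_cons] <;>
        field_simp <;> ring
    rwa [hcm] at hmain

set_option maxHeartbeats 1000000 in
/-- Let `T` be the right triangle with vertices `(a,0)`, `(a,b)`, `(1,0)` where
`0 ≤ a < 1` and `b > 0`. Then the average distance from the origin to the points
of `T` is strictly greater than `1/3`. -/
theorem right_triangle_avg_dist_gt_third (a b : ℝ) (ha0 : 0 ≤ a) (ha1 : a < 1) (hb : 0 < b)
    (T : Set (EuclideanSpace ℝ (Fin 2)))
    (hT : T = convexHull ℝ {!₂[a, 0], !₂[a, b], !₂[1, 0]}) :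
    (1 : ℝ) / 3 < (∫ q in T, dist (0 : EuclideanSpace ℝ (Fin 2)) q) / (volume T).toReal := by
  have hc : (0:ℝ) < 1 - a := by linarith
  have hTset : T = {p : EuclideanSpace ℝ (Fin 2) |
      a ≤ p 0 ∧ p 0 ≤ 1 ∧ 0 ≤ p 1 ∧ (1 - a) * p 1 ≤ b * (1 - p 0)} :=
    hT.trans (hull_eq a b ha0 ha1 hb)
  have hpre : Fe ⁻¹' T = Sr a b := by
    ext p
    simp only [hTset, Set.mem_preimage, Set.mem_setOf_eq, Fe0, Fe1, Sr]
  have hTclosed : IsClosed T := by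
    rw [hTset]
    have h0 : Continuous fun p : EuclideanSpace ℝ (Fin 2) => p 0 :=
      (EuclideanSpace.proj (0 : Fin 2)).continuous
    have h1 : Continuous fun p : EuclideanSpace ℝ (Fin 2) => p 1 :=
      (EuclideanSpace.proj (1 : Fin 2)).continuous
    have : {p : EuclideanSpace ℝ (Fin 2) |
        a ≤ p 0 ∧ p 0 ≤ 1 ∧ 0 ≤ p 1 ∧ (1 - a) * p 1 ≤ b * (1 - p 0)} =
        {p : EuclideanSpace ℝ (Fin 2) | a ≤ p 0} ∩ {p | p 0 ≤ 1} ∩ {p | 0 ≤ p 1} ∩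
        {p | (1 - a) * p 1 ≤ b * (1 - p 0)} := by
      ext p; simp only [Set.mem_setOf_eq, Set.mem_inter_iff]; tauto
    rw [this]
    exact (((isClosed_le continuous_const h0).inter
      (isClosed_le h0 continuous_const)).inter
      (isClosed_le continuous_const h1)).inter
      (isClosed_le (by continuity) (by continuity))
  -- transfer volume
  have hvolT : volume T = volume (Sr a b) := by
    rw [← hpre]
    exact (Fe_mp.measure_preimage hTclosed.measurableSet.nullMeasurableSet).symm
  -- transfer the integral
  have hint : (∫ q in T, dist (0 : EuclideanSpace ℝ (Fin 2)) q)
      = ∫ p in Sr a b, Real.sqrt (p.1 ^ 2 + p.2 ^ 2) := by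
    rw [← Fe_mp.setIntegral_preimage_emb Fe.measurableEmbedding, hpre]
    exact setIntegral_congr_fun (Sr_meas a b) fun p _ => Fe_dist p
  -- integrability
  have hcomp := Sr_compact a b ha1 hb
  have hI1 : IntegrableOn (fun _ : ℝ × ℝ => (1:ℝ)) (Sr a b) :=
    integrableOn_const hcomp.measure_lt_top.ne
  have hIx : IntegrableOn (fun p : ℝ × ℝ => p.1) (Sr a b) :=
    continuous_fst.continuousOn.integrableOn_compact hcomp
  have hsqc : Continuous fun p : ℝ × ℝ => Real.sqrt (p.1 ^ 2 + p.2 ^ 2) :=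
    ((continuous_fst.pow 2).add (continuous_snd.pow 2)).sqrt
  have hIs : IntegrableOn (fun p : ℝ × ℝ => Real.sqrt (p.1 ^ 2 + p.2 ^ 2)) (Sr a b) :=
    hsqc.continuousOn.integrableOn_compact hcomp
  -- volume value
  have hvol : (volume (Sr a b)).toReal = b * (1 - a) / 2 := by
    have h1 : ∫ p in Sr a b, (1:ℝ) = (volume (Sr a b)).toReal := by
      rw [setIntegral_const]; simp [Measure.real]
    rw [← h1, fubini_tri a b ha1 _ hI1]
    have heq : Set.EqOn (fun x => ∫ _ in Set.Icc 0 (b * (1 - x) / (1 - a)), (1:ℝ))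
        (fun x => b * (1 - x) / (1 - a)) (Set.Icc a 1) := by
      intro x hx
      have hg0 : (0:ℝ) ≤ b * (1 - x) / (1 - a) :=
        div_nonneg (mul_nonneg hb.le (by linarith [hx.2])) hc.le
      simp only
      rw [setIntegral_const, smul_eq_mul, mul_one, Measure.real, Real.volume_Icc, sub_zero,
        ENNReal.toReal_ofReal hg0]
    rw [setIntegral_congr_fun measurableSet_Icc heq, integral_Icc_eq_integral_Ioc,
      ← intervalIntegral.integral_of_le ha1.le]
    have h2 : ∀ x : ℝ, b * (1 - x) / (1 - a) = (b / (1 - a)) * (1 - x) := fun x => by ring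
    rw [intervalIntegral.integral_congr (g := fun x => (b / (1 - a)) * (1 - x)) (fun x _ => h2 x),
      intervalIntegral.integral_const_mul,
      intervalIntegral.integral_sub intervalIntegrable_const
        intervalIntegral.intervalIntegrable_id,
      intervalIntegral.integral_const, integral_id]
    field_simp
    ring
  -- integral of x
  have hJ : ∫ p in Sr a b, p.1 = (b / (1 - a)) * ((1 - a^2) / 2 - (1 - a^3) / 3) := by
    rw [fubini_tri a b ha1 _ hIx]
    have heq : Set.EqOn (fun x => ∫ _ in Set.Icc 0 (b * (1 - x) / (1 - a)), x)
        (fun x => b * (1 - x) / (1 - a) * x) (Set.Icc a 1) := by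
      intro x hx
      have hg0 : (0:ℝ) ≤ b * (1 - x) / (1 - a) :=
        div_nonneg (mul_nonneg hb.le (by linarith [hx.2])) hc.le
      simp only
      rw [setIntegral_const, smul_eq_mul, Measure.real, Real.volume_Icc, sub_zero,
        ENNReal.toReal_ofReal hg0]
    rw [setIntegral_congr_fun measurableSet_Icc heq, integral_Icc_eq_integral_Ioc,
      ← intervalIntegral.integral_of_le ha1.le]
    have h2 : ∀ x : ℝ, b * (1 - x) / (1 - a) * x = (b / (1 - a)) * (x - x^2) := fun x => by ring
    rw [intervalIntegral.integral_congr (g := fun x => (b / (1 - a)) * (x - x^2)) (fun x _ => h2 x),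
      intervalIntegral.integral_const_mul,
      intervalIntegral.integral_sub intervalIntegral.intervalIntegrable_id
        (intervalIntegral.intervalIntegrable_pow 2),
      integral_id, integral_pow]
    norm_num
  -- strict positivity of the correction
  have hP : 0 < ∫ p in Sr a b, (Real.sqrt (p.1 ^ 2 + p.2 ^ 2) - p.1) := by
    have hnn : ∀ p : ℝ × ℝ, 0 ≤ Real.sqrt (p.1 ^ 2 + p.2 ^ 2) - p.1 := by
      intro p
      have h1 : p.1 ≤ |p.1| := le_abs_self _
      have h2 : Real.sqrt (p.1 ^ 2) ≤ Real.sqrt (p.1 ^ 2 + p.2 ^ 2) :=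
        Real.sqrt_le_sqrt (by nlinarith [sq_nonneg p.2])
      rw [Real.sqrt_sq_eq_abs] at h2
      linarith
    refine (setIntegral_pos_iff_support_of_nonneg_ae
      (Filter.Eventually.of_forall (fun p => hnn p)) (hIs.sub hIx)).2 ?_
    have hU : Set.Ioo a ((a+1)/2) ×ˢ Set.Ioo 0 (b/2) ⊆
        (Function.support fun p : ℝ × ℝ => Real.sqrt (p.1 ^ 2 + p.2 ^ 2) - p.1) ∩ Sr a b := by
      rintro ⟨x, y⟩ ⟨⟨hx1, hx2⟩, hy1, hy2⟩
      constructor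
      · have h2 : Real.sqrt (x ^ 2) < Real.sqrt (x ^ 2 + y ^ 2) :=
          Real.sqrt_lt_sqrt (sq_nonneg x) (by nlinarith)
        rw [Real.sqrt_sq_eq_abs] at h2
        have h1 : x ≤ |x| := le_abs_self _
        exact ne_of_gt (by simp only; linarith)
      · exact ⟨hx1.le, by linarith, hy1.le, by nlinarith⟩
    refine lt_of_lt_of_le ?_ (measure_mono hU)
    rw [Measure.volume_eq_prod, Measure.prod_prod, Real.volume_Ioo, Real.volume_Ioo]
    apply ENNReal.mul_pos
    · simp only [ne_eq, ENNReal.ofReal_eq_zero, not_le]; linarith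
    · simp only [ne_eq, ENNReal.ofReal_eq_zero, not_le]; linarith
  -- final arithmetic
  rw [hint, hvolT, hvol]
  rw [lt_div_iff₀ (by positivity)]
  have hsplit : ∫ p in Sr a b, Real.sqrt (p.1 ^ 2 + p.2 ^ 2)
      = (∫ p in Sr a b, (Real.sqrt (p.1 ^ 2 + p.2 ^ 2) - p.1)) + ∫ p in Sr a b, p.1 := by
    rw [integral_sub hIs hIx]
    ring
  rw [hsplit, hJ]
  have key : 1 / 3 * (b * (1 - a) / 2) ≤ (b / (1 - a)) * ((1 - a^2) / 2 - (1 - a^3) / 3) := by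
    rw [show (b / (1 - a)) * ((1 - a^2) / 2 - (1 - a^3) / 3)
        = (b * (3 * (1 - a^2) - 2 * (1 - a^3))) / (6 * (1 - a)) by field_simp; ring]
    rw [le_div_iff₀ (by linarith)]
    nlinarith [mul_nonneg (mul_nonneg hb.le ha0) (sq_nonneg (1 - a))]
  linarith
end

section
/- Let T be a triangle contained in the first quadrant with one vertical side lying on the line x = a, where 0 ≤ a < 1, and third vertex at (1,0). Then the average distance from the origin to points of T is strictly greater than 1/3. -/
open MeasureTheory Metric Real Set

lemma hull_eq_s3 (a y₁ y₂ : ℝ) (ha0 : 0 ≤ a) (ha1 : a < 1) (hy₁ : 0 ≤ y₁) (hy : y₁ < y₂) :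
    convexHull ℝ {!₂[a, y₁], !₂[a, y₂], !₂[1, 0]} =
    {q : EuclideanSpace ℝ (Fin 2) |
      q 0 ∈ Set.Icc a 1 ∧ q 1 ∈ Set.Icc (y₁ * (1 - q 0) / (1 - a)) (y₂ * (1 - q 0) / (1 - a))} := by
  have h1a : (0:ℝ) < 1 - a := by linarith
  have hsa : (1 - a) / (1 - a) = 1 := div_self h1a.ne'
  apply le_antisymm
  · apply convexHull_min
    · rintro v hv
      simp only [Set.mem_insert_iff, Set.mem_singleton_iff] at hv
      rcases hv with rfl | rfl | rfl <;>
        refine ⟨⟨?_, ?_⟩, ?_, ?_⟩ <;>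
        simp only [PiLp.toLp_apply, Matrix.cons_val_zero, Matrix.cons_val_one, Matrix.head_cons,
          mul_div_assoc, hsa, mul_one, sub_self, zero_div, mul_zero, zero_mul] <;>
        linarith
    · rintro p hp q hq s t hs ht hst
      obtain ⟨⟨hp1, hp2⟩, hp3, hp4⟩ := hp
      obtain ⟨⟨hq1, hq2⟩, hq3, hq4⟩ := hq
      have e0 : (s • p + t • q) 0 = s * p 0 + t * q 0 := by simp
      have e1 : (s • p + t • q) 1 = s * p 1 + t * q 1 := by simp
      rw [div_le_iff₀ h1a] at hq3 hp3
      rw [le_div_iff₀ h1a] at hq4 hp4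
      refine ⟨⟨?_, ?_⟩, ?_, ?_⟩ <;> rw [e0] <;> [skip; skip;
        (rw [e1, div_le_iff₀ h1a]); (rw [e1, le_div_iff₀ h1a])] <;> nlinarith
  · rintro q ⟨⟨hq1, hq2⟩, hq3, hq4⟩
    simp only [Set.mem_Icc] at hq3 hq4
    have hne : y₂ - y₁ ≠ 0 := by linarith
    rcases eq_or_lt_of_le hq2 with h1 | h1
    · have hq30 : y₁ * (1 - q 0) / (1 - a) = 0 := by rw [← h1]; simp
      have hq40 : y₂ * (1 - q 0) / (1 - a) = 0 := by rw [← h1]; simp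
      have hy0 : q 1 = 0 := le_antisymm (hq40 ▸ hq4) (hq30 ▸ hq3)
      have : q = !₂[1, 0] := by
        ext i
        fin_cases i
        · show q 0 = 1; exact h1
        · show q 1 = 0; exact hy0
      rw [this]
      exact subset_convexHull ℝ _ (by simp)
    · set s : ℝ := (1 - q 0) / (1 - a) with hsdef
      have hs0 : 0 < s := div_pos (by linarith) h1a
      have hs1 : s ≤ 1 := by
        rw [hsdef, div_le_one h1a]; linarith
      have hysl : s * y₁ ≤ q 1 / s * s := by
        rw [div_mul_cancel₀ _ hs0.ne']
        calc s * y₁ = y₁ * (1 - q 0) / (1 - a) := by rw [hsdef]; ring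
        _ ≤ q 1 := hq3
      have hysu : q 1 / s * s ≤ s * y₂ := by
        rw [div_mul_cancel₀ _ hs0.ne']
        calc q 1 ≤ y₂ * (1 - q 0) / (1 - a) := hq4
        _ = s * y₂ := by rw [hsdef]; ring
      have hyl : y₁ ≤ q 1 / s := by nlinarith
      have hyu : q 1 / s ≤ y₂ := by nlinarith
      have hw : (!₂[a, q 1 / s] : EuclideanSpace ℝ (Fin 2)) ∈
          convexHull ℝ ({!₂[a, y₁], !₂[a, y₂], !₂[1, 0]} : Set (EuclideanSpace ℝ (Fin 2))) := by
        apply segment_subset_convexHull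
          (show (!₂[a, y₁] : EuclideanSpace ℝ (Fin 2)) ∈ _ by simp)
          (show (!₂[a, y₂] : EuclideanSpace ℝ (Fin 2)) ∈ _ by simp)
        refine ⟨(y₂ - q 1 / s) / (y₂ - y₁), (q 1 / s - y₁) / (y₂ - y₁),
          div_nonneg (by linarith) (by linarith), div_nonneg (by linarith) (by linarith), by field_simp <;> ring, ?_⟩
        ext i
        fin_cases i <;> simp <;> field_simp <;> ring
      have hv3 : (!₂[1, 0] : EuclideanSpace ℝ (Fin 2)) ∈
          convexHull ℝ ({!₂[a, y₁], !₂[a, y₂], !₂[1, 0]} : Set (EuclideanSpace ℝ (Fin 2))) :=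
        subset_convexHull ℝ _ (by simp)
      have c0 : q 0 = (1 - s) * 1 + s * a := by
        rw [hsdef]; field_simp <;> ring
      have c1 : q 1 = (1 - s) * 0 + s * (q 1 / s) := by
        rw [mul_div_cancel₀ _ hs0.ne']; ring
      have hqeq : q = (1 - s) • (!₂[1, 0] : EuclideanSpace ℝ (Fin 2)) + s • !₂[a, q 1 / s] := by
        ext i
        fin_cases i
        · simpa using c0
        · simpa using c1
      rw [hqeq]
      exact (convex_convexHull ℝ _).segment_subset hv3 hw
        ⟨1 - s, s, by linarith, hs0.le, by ring, rfl⟩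

set_option maxHeartbeats 1000000 in
/-- Let `T` be a triangle contained in the first quadrant with a vertical side on the
line `x = a`, where `0 ≤ a < 1`, and third vertex `(1,0)`. Then the average distance
from the origin to the points of `T` is strictly greater than `1/3`. -/
theorem triangle_vertical_side_avg_dist_gt_third (a y₁ y₂ : ℝ)
    (ha0 : 0 ≤ a) (ha1 : a < 1) (hy₁ : 0 ≤ y₁) (hy : y₁ < y₂)
    (T : Set (EuclideanSpace ℝ (Fin 2)))
    (hT : T = convexHull ℝ {!₂[a, y₁], !₂[a, y₂], !₂[1, 0]}) :
    (1 : ℝ) / 3 < (∫ q in T, dist (0 : EuclideanSpace ℝ (Fin 2)) q) / (volume T).toReal := by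
  have h1a : (0:ℝ) < 1 - a := by linarith
  have hy₂ : 0 < y₂ := lt_of_le_of_lt hy₁ hy
  set S : Set (ℝ × ℝ) :=
    {p : ℝ × ℝ | a ≤ p.1 ∧ p.1 ≤ 1 ∧ y₁ * (1 - p.1) / (1 - a) ≤ p.2 ∧
      p.2 ≤ y₂ * (1 - p.1) / (1 - a)} with hSdef
  -- the coordinate equivalence
  set e : EuclideanSpace ℝ (Fin 2) ≃ᵐ ℝ × ℝ :=
    (MeasurableEquiv.toLp 2 (Fin 2 → ℝ)).symm.trans (MeasurableEquiv.finTwoArrow) with hedef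
  have he : MeasurePreserving e volume volume :=
    (volume_preserving_finTwoArrow ℝ).comp
      (EuclideanSpace.volume_preserving_symm_measurableEquiv_toLp (Fin 2))
  have hTe : T = e ⁻¹' S := by
    rw [hT, hull_eq_s3 a y₁ y₂ ha0 ha1 hy₁ hy]
    ext q
    simp only [Set.mem_setOf_eq, Set.mem_preimage, Set.mem_Icc, hSdef]
    exact ⟨fun ⟨⟨h1, h2⟩, h3, h4⟩ => ⟨h1, h2, h3, h4⟩,
      fun ⟨h1, h2, h3, h4⟩ => ⟨⟨h1, h2⟩, h3, h4⟩⟩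
  have hSclosed : IsClosed S := by
    refine IsClosed.inter (isClosed_le continuous_const continuous_fst) ?_
    refine IsClosed.inter (isClosed_le continuous_fst continuous_const) ?_
    refine IsClosed.inter (isClosed_le ?_ continuous_snd) (isClosed_le continuous_snd ?_)
    · exact (continuous_const.mul (continuous_const.sub continuous_fst)).div_const _
    · exact (continuous_const.mul (continuous_const.sub continuous_fst)).div_const _
  have hmeas : MeasurableSet S := hSclosed.measurableSet
  have hScomp : IsCompact S := by
    refine IsCompact.of_isClosed_subset (isCompact_Icc (a := (a, 0)) (b := (1, y₂)))
      hSclosed ?_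
    rintro ⟨x, y⟩ ⟨h1, h2, h3, h4⟩
    have hfx : 0 ≤ y₁ * (1 - x) / (1 - a) :=
      div_nonneg (mul_nonneg hy₁ (by linarith)) h1a.le
    have hgx : y₂ * (1 - x) / (1 - a) ≤ y₂ := by
      rw [div_le_iff₀ h1a]; nlinarith
    simp only [Set.mem_Icc, Prod.mk_le_mk]
    exact ⟨⟨h1, by linarith⟩, h2, by linarith⟩
  have hvol_fin : volume S ≠ ⊤ := hScomp.measure_lt_top.ne
  have hc_sqrt : Continuous (fun p : ℝ × ℝ => Real.sqrt (p.1 ^ 2 + p.2 ^ 2)) :=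
    Real.continuous_sqrt.comp ((continuous_fst.pow 2).add (continuous_snd.pow 2))
  have hint_sqrt : IntegrableOn (fun p : ℝ × ℝ => Real.sqrt (p.1 ^ 2 + p.2 ^ 2)) S :=
    hc_sqrt.continuousOn.integrableOn_compact hScomp
  have hint_fst : IntegrableOn (fun p : ℝ × ℝ => p.1) S :=
    continuous_fst.continuousOn.integrableOn_compact hScomp
  have hint_lin : IntegrableOn (fun p : ℝ × ℝ => p.1 - 1 / 3) S :=
    (continuous_fst.sub continuous_const).continuousOn.integrableOn_compact hScomp
  have hint_c : IntegrableOn (fun _ : ℝ × ℝ => (1 : ℝ) / 3) S :=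
    integrableOn_const hScomp.measure_lt_top.ne
  -- a box inside S with positive volume
  set m : ℝ := (a + (1 - y₁ * (1 - a) / y₂)) / 2 with hm
  set gm : ℝ := y₂ * (1 - m) / (1 - a) with hgm
  have hd0 : y₁ * (1 - a) / y₂ < 1 - a := by
    rw [div_lt_iff₀ hy₂]; nlinarith
  have hd1 : 0 ≤ y₁ * (1 - a) / y₂ := by positivity
  have ham : a < m := by rw [hm]; linarith
  have hm1 : m < 1 := by rw [hm]; linarith
  have hgm1 : y₁ < gm := by
    have h2 : y₂ * (1 - m) = (y₂ * (1 - a) + y₁ * (1 - a)) / 2 := by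
      rw [hm]; field_simp; ring
    rw [hgm, lt_div_iff₀ h1a, h2]
    nlinarith
  set B : Set (ℝ × ℝ) := Set.Ioo a m ×ˢ Set.Ioo y₁ gm with hB
  have hBS : B ⊆ S := by
    rintro ⟨x, y⟩ ⟨⟨hx1, hx2⟩, hy1, hy2⟩
    change a < x at hx1; change x < m at hx2; change y₁ < y at hy1; change y < gm at hy2
    refine ⟨hx1.le, by linarith, ?_, ?_⟩
    · have : y₁ * (1 - x) / (1 - a) ≤ y₁ := by
        rw [div_le_iff₀ h1a]; nlinarith
      linarith
    · have : gm ≤ y₂ * (1 - x) / (1 - a) := by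
        rw [hgm, div_le_div_iff₀ h1a h1a]; nlinarith [mul_pos hy₂ h1a]
      linarith
  have hvolB : 0 < volume B := by
    have : volume B = ENNReal.ofReal (m - a) * ENNReal.ofReal (gm - y₁) := by
      rw [hB, Measure.volume_eq_prod, Measure.prod_prod, Real.volume_Ioo, Real.volume_Ioo]
    rw [this]
    exact ENNReal.mul_pos (ENNReal.ofReal_pos.2 (by linarith)).ne'
      (ENNReal.ofReal_pos.2 (by linarith)).ne'
  have hvolS0 : volume S ≠ 0 := (lt_of_lt_of_le hvolB (measure_mono hBS)).ne'
  have hV : 0 < (volume S).toReal :=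
    ENNReal.toReal_pos hvolS0 hvol_fin
  -- positivity of the excess
  have hH : 0 < ∫ p in S, (Real.sqrt (p.1 ^ 2 + p.2 ^ 2) - p.1) := by
    rw [setIntegral_pos_iff_support_of_nonneg_ae
      (Filter.Eventually.of_forall fun p => sub_nonneg.2
        (le_trans (le_abs_self _) (by
          rw [← Real.sqrt_sq_eq_abs]
          exact Real.sqrt_le_sqrt (by nlinarith [sq_nonneg p.2]))))
      (hint_sqrt.sub hint_fst)]
    refine lt_of_lt_of_le hvolB (measure_mono ?_)
    rintro ⟨x, y⟩ hpB
    obtain ⟨⟨hx1, hx2⟩, hy1, hy2⟩ := hpB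
    change a < x at hx1; change x < m at hx2; change y₁ < y at hy1; change y < gm at hy2
    refine ⟨?_, hBS ⟨⟨hx1, hx2⟩, hy1, hy2⟩⟩
    have hx0 : 0 ≤ x := le_trans ha0 hx1.le
    have hy0 : 0 < y := lt_of_le_of_lt hy₁ hy1
    have : Real.sqrt (x ^ 2) < Real.sqrt (x ^ 2 + y ^ 2) :=
      Real.sqrt_lt_sqrt (sq_nonneg x) (by nlinarith)
    rw [Real.sqrt_sq hx0] at this
    simp only [Function.mem_support]
    intro hcon
    rw [sub_eq_zero] at hcon
    exact absurd hcon this.ne'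
  -- Fubini computation of the linear integral
  have hJ : (∫ p in S, (p.1 - 1 / 3)) = (y₂ - y₁) / (1 - a) * (a * (1 - a) ^ 2 / 3) := by
    have hind : Integrable (S.indicator fun p : ℝ × ℝ => p.1 - 1 / 3) (volume.prod volume) := by
      rw [← Measure.volume_eq_prod]
      exact (integrable_indicator_iff hmeas).2 hint_lin
    rw [← integral_indicator hmeas, Measure.volume_eq_prod, integral_prod _ hind]
    have inner : ∀ x : ℝ, (∫ y, S.indicator (fun p : ℝ × ℝ => p.1 - 1 / 3) (x, y)) =
        (Set.Icc a 1).indicator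
          (fun x => (x - 1 / 3) * ((y₂ - y₁) * (1 - x) / (1 - a))) x := by
      intro x
      by_cases hx : x ∈ Set.Icc a 1
      · obtain ⟨hx1, hx2⟩ := hx
        have heq : (fun y => S.indicator (fun p : ℝ × ℝ => p.1 - 1 / 3) (x, y)) =
            (Set.Icc (y₁ * (1 - x) / (1 - a)) (y₂ * (1 - x) / (1 - a))).indicator
              (fun _ => x - 1 / 3) := by
          funext y
          by_cases hyc : y ∈ Set.Icc (y₁ * (1 - x) / (1 - a)) (y₂ * (1 - x) / (1 - a))
          · rw [Set.indicator_of_mem hyc, Set.indicator_of_mem]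
            exact ⟨hx1, hx2, hyc.1, hyc.2⟩
          · rw [Set.indicator_of_notMem hyc, Set.indicator_of_notMem]
            intro hcon
            exact hyc ⟨hcon.2.2.1, hcon.2.2.2⟩
        have hfg : y₁ * (1 - x) / (1 - a) ≤ y₂ * (1 - x) / (1 - a) := by
          rw [div_le_div_iff₀ h1a h1a]
          have h9 := mul_nonneg (mul_nonneg (by linarith : (0:ℝ) ≤ y₂ - y₁)
            (by linarith : (0:ℝ) ≤ 1 - x)) h1a.le
          nlinarith
        rw [heq, integral_indicator_const _ measurableSet_Icc,
          Set.indicator_of_mem (Set.mem_Icc.2 ⟨hx1, hx2⟩), Real.volume_real_Icc_of_le hfg, smul_eq_mul]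
        ring
      · have heq : (fun y => S.indicator (fun p : ℝ × ℝ => p.1 - 1 / 3) (x, y)) =
            fun _ => (0 : ℝ) := by
          funext y
          rw [Set.indicator_of_notMem]
          intro hcon
          rw [Set.mem_Icc] at hx
          exact hx ⟨hcon.1, hcon.2.1⟩
        rw [heq, Set.indicator_of_notMem hx, integral_zero]
    simp only [inner]
    rw [integral_indicator measurableSet_Icc, MeasureTheory.integral_Icc_eq_integral_Ioc,
      ← intervalIntegral.integral_of_le (by linarith : a ≤ 1)]
    have hring : (fun x : ℝ => (x - 1 / 3) * ((y₂ - y₁) * (1 - x) / (1 - a))) =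
        fun x : ℝ => (y₂ - y₁) / (1 - a) * ((1 - x) * (x - 1 / 3)) := by
      funext x; field_simp
    rw [hring, intervalIntegral.integral_const_mul]
    have hkey : (∫ x in a..1, (1 - x) * (x - 1 / 3)) = a * (1 - a) ^ 2 / 3 := by
      have hderiv : ∀ x ∈ Set.uIcc a 1,
          HasDerivAt (fun t : ℝ => -(t ^ 3) / 3 + 2 / 3 * t ^ 2 - t / 3)
            ((1 - x) * (x - 1 / 3)) x := by
        intro x _
        have h := (((hasDerivAt_pow 3 x).div_const 3).fun_neg.fun_add
          ((hasDerivAt_pow 2 x).const_mul (2 / 3))).fun_sub ((hasDerivAt_id x).div_const 3)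
        have e1 : (fun t : ℝ => -(t ^ 3) / 3 + 2 / 3 * t ^ 2 - t / 3) =
            fun i => -(i ^ 3 / 3) + 2 / 3 * i ^ 2 - id i / 3 := by
          funext t; simp only [id]; ring
        rw [e1]
        exact h.congr_deriv (by norm_num; ring)
      rw [intervalIntegral.integral_eq_sub_of_hasDerivAt hderiv
        (Continuous.intervalIntegrable ((continuous_const.sub continuous_id).mul ((continuous_id.sub continuous_const))) a 1)]
      ring
    rw [hkey]
  have hJ0 : 0 ≤ ∫ p in S, (p.1 - 1 / 3) := by
    rw [hJ]
    exact mul_nonneg (div_nonneg (by linarith) h1a.le) (by positivity)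
  -- splitting the integrals
  have hsplit1 : (∫ p in S, Real.sqrt (p.1 ^ 2 + p.2 ^ 2)) =
      (∫ p in S, p.1) + ∫ p in S, (Real.sqrt (p.1 ^ 2 + p.2 ^ 2) - p.1) := by
    calc (∫ p in S, Real.sqrt (p.1 ^ 2 + p.2 ^ 2))
        = ∫ p in S, (p.1 + (Real.sqrt (p.1 ^ 2 + p.2 ^ 2) - p.1)) := by
          congr 1; funext p; ring
      _ = _ := integral_add hint_fst (hint_sqrt.sub hint_fst)
  have hsplit2 : (∫ p in S, p.1) =
      (∫ p in S, (p.1 - 1 / 3)) + (volume S).toReal * (1 / 3) := by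
    have hc := setIntegral_const (μ := volume) (s := S) ((1 : ℝ) / 3)
    rw [smul_eq_mul] at hc
    calc (∫ p in S, p.1)
        = ∫ p in S, ((p.1 - 1 / 3) + 1 / 3) := by congr 1; funext p; ring
      _ = (∫ p in S, (p.1 - 1 / 3)) + ∫ p in S, ((1:ℝ)/3) := integral_add hint_lin hint_c
      _ = (∫ p in S, (p.1 - 1 / 3)) + (volume S).toReal * (1 / 3) := by rw [hc]; rfl
  -- transfer to the triangle
  have hdist : ∀ q : EuclideanSpace ℝ (Fin 2),
      dist (0 : EuclideanSpace ℝ (Fin 2)) q = Real.sqrt ((q 0) ^ 2 + (q 1) ^ 2) := by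
    intro q
    rw [dist_zero_left, EuclideanSpace.norm_eq]
    simp [Fin.sum_univ_two, Real.norm_eq_abs, sq_abs]
  have hI : (∫ q in T, dist (0 : EuclideanSpace ℝ (Fin 2)) q) =
      ∫ p in S, Real.sqrt (p.1 ^ 2 + p.2 ^ 2) := by
    rw [hTe]
    calc (∫ q in e ⁻¹' S, dist (0 : EuclideanSpace ℝ (Fin 2)) q)
        = ∫ q in e ⁻¹' S, Real.sqrt ((e q).1 ^ 2 + (e q).2 ^ 2) := by
          congr 1
          funext q
          exact hdist q
      _ = ∫ p in S, Real.sqrt (p.1 ^ 2 + p.2 ^ 2) :=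
          he.setIntegral_preimage_emb e.measurableEmbedding
            (fun p : ℝ × ℝ => Real.sqrt (p.1 ^ 2 + p.2 ^ 2)) S
  have hvolT : volume T = volume S := by
    rw [hTe]
    exact he.measure_preimage hmeas.nullMeasurableSet
  rw [hI, hvolT, lt_div_iff₀ hV, hsplit1, hsplit2]
  linarith
end

section
/- For every centrally symmetric convex body Q in the plane, μ*_Q ≤ (1/3)·Δ(Q). -/
open MeasureTheory Metric Real
open Set

/-- For every centrally symmetric convex body `Q` in the plane (symmetric about a
point `c`, i.e. reflection through `c` maps `Q` onto itself),
`μ*_Q ≤ (1/3)·Δ(Q)`. -/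
theorem fermat_weber_upper_bound_symmetric (Q : Set (EuclideanSpace ℝ (Fin 2)))
    (hQc : IsCompact Q) (hQconv : Convex ℝ Q) (hQint : (interior Q).Nonempty)
    (c : EuclideanSpace ℝ (Fin 2)) (hsym : (fun p => 2 • c - p) '' Q = Q) :
    (⨅ p : EuclideanSpace ℝ (Fin 2), (∫ q in Q, dist p q) / (volume Q).toReal) ≤
      (1 : ℝ) / 3 * Metric.diam Q := by
  have hQne : Q.Nonempty := hQint.mono interior_subset
  have hQmeas : MeasurableSet Q := hQc.measurableSet
  -- reflection stays in Q
  have hrefl : ∀ q ∈ Q, 2 • c - q ∈ Q := by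
    intro q hq
    rw [← hsym]; exact ⟨q, hq, rfl⟩
  -- c ∈ Q
  have hcQ : c ∈ Q := by
    obtain ⟨q, hq⟩ := hQne
    have h2 := hrefl q hq
    have := hQconv hq h2 (by norm_num : (0:ℝ) ≤ 1/2) (by norm_num : (0:ℝ) ≤ 1/2) (by norm_num)
    convert this using 1
    rw [two_smul]
    module
  set r : ℝ := Metric.diam Q / 2 with hr_def
  -- every point of Q is within r of c
  have hdist : ∀ q ∈ Q, dist c q ≤ r := by
    intro q hq
    have h2 := hrefl q hq
    have hd : dist q (2 • c - q) ≤ Metric.diam Q := dist_le_diam_of_mem hQc.isBounded hq h2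
    have h2d : dist q (2 • c - q) = 2 * dist c q := by
      rw [dist_eq_norm, dist_eq_norm, two_smul,
        show q - (c + c - q) = (2:ℝ) • (q - c) by module, norm_smul,
        show c - q = (-1:ℝ) • (q - c) by module, norm_smul]
      norm_num
    rw [h2d] at hd
    linarith
  -- volume facts
  have hvol_lt : volume Q < ⊤ := hQc.measure_lt_top
  have hvol_pos : 0 < volume Q :=
    lt_of_lt_of_le (isOpen_interior.measure_pos volume hQint) (measure_mono interior_subset)
  set V : ℝ := (volume Q).toReal with hV_def
  have hV_pos : 0 < V := ENNReal.toReal_pos hvol_pos.ne' hvol_lt.ne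
  -- diam positive
  have hdiam_pos : 0 < Metric.diam Q := by
    rcases lt_or_eq_of_le (Metric.diam_nonneg (s := Q)) with h | h
    · exact h
    · exfalso
      have hsub : Q.Subsingleton := by
        intro x hx y hy
        have := dist_le_diam_of_mem hQc.isBounded hx hy
        rw [← h] at this
        exact dist_le_zero.mp this
      have := hsub.measure_zero (μ := volume)
      exact hvol_pos.ne' this
  have hr_pos : 0 < r := by positivity

  -- layer cake setup
  haveI : IsFiniteMeasure (volume.restrict Q) :=
    ⟨by rw [Measure.restrict_apply_univ]; exact hvol_lt⟩
  have hf_cont : Continuous fun q : EuclideanSpace ℝ (Fin 2) => dist c q :=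
    continuous_const.dist continuous_id
  have hf_int : IntegrableOn (fun q => dist c q) Q volume :=
    hf_cont.continuousOn.integrableOn_compact hQc
  set g : ℝ → ℝ := fun t => ((volume.restrict Q) {a | t < dist c a}).toReal with hg_def
  have hlayer : (∫ q in Q, dist c q) = ∫ t in Ioi (0:ℝ), g t :=
    hf_int.integral_eq_integral_meas_lt (Filter.Eventually.of_forall fun q => dist_nonneg)
  have hg_eq : ∀ t, g t = (volume ({a | t < dist c a} ∩ Q)).toReal := fun t => by
    rw [hg_def]
    simp only []
    rw [Measure.restrict_apply (isOpen_lt continuous_const hf_cont).measurableSet]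
  have hg_anti : Antitone g := by
    intro a b hab
    exact ENNReal.toReal_mono (measure_ne_top _ _)
      (measure_mono fun x hx => lt_of_le_of_lt hab hx)
  have hg_zero : ∀ t, r ≤ t → g t = 0 := by
    intro t ht
    rw [hg_eq]
    have hemp : {a | t < dist c a} ∩ Q = ∅ := by
      rw [Set.eq_empty_iff_forall_notMem]
      rintro a ⟨h1, h2⟩
      exact absurd (lt_of_le_of_lt ht h1) (not_lt.mpr (hdist a h2))
    rw [hemp]
    simp
  -- pointwise bound
  have hkey : ∀ t ∈ Ioc (0:ℝ) r, g t ≤ V * (1 - t^2/r^2) := by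
    rintro t ⟨ht0, htr⟩
    set S := Q ∩ closedBall c t with hS_def
    have hSsub : S ⊆ Q := Set.inter_subset_left
    have hSmeas : MeasurableSet S := hQmeas.inter measurableSet_closedBall
    have hSfin : volume S ≠ ⊤ := (lt_of_le_of_lt (measure_mono hSsub) hvol_lt).ne
    have hs0 : 0 ≤ t/r := by positivity
    have hs1 : t/r ≤ 1 := by rw [div_le_one hr_pos]; exact htr
    have himg : (AffineMap.homothety c (t/r)) '' Q ⊆ S := by
      rintro _ ⟨x, hx, rfl⟩
      constructor
      · have hmem := hQconv hcQ hx (by linarith : (0:ℝ) ≤ 1 - t/r) hs0 (by ring)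
        have heq : (AffineMap.homothety c (t/r)) x = (1 - t/r) • c + (t/r) • x := by
          rw [AffineMap.homothety_apply]
          simp only [vsub_eq_sub, vadd_eq_add]
          module
        rw [heq]
        exact hmem
      · rw [mem_closedBall, AffineMap.homothety_apply, dist_eq_norm]
        simp only [vsub_eq_sub, vadd_eq_add]
        rw [show (t / r) • (x - c) + c - c = (t/r) • (x - c) from by module, norm_smul]
        have hxc : ‖x - c‖ ≤ r := by
          rw [← dist_eq_norm, dist_comm]
          exact hdist x hx
        calc |t/r| * ‖x - c‖ = (t/r) * ‖x - c‖ := by rw [abs_of_nonneg hs0]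
          _ ≤ (t/r) * r := by
              exact mul_le_mul_of_nonneg_left hxc hs0
          _ = t := by field_simp
    have hSvol : (t/r)^2 * V ≤ (volume S).toReal := by
      have h1 : volume ((AffineMap.homothety c (t/r)) '' Q)
          = ENNReal.ofReal ((t/r)^2) * volume Q := by
        rw [Measure.addHaar_image_homothety, finrank_euclideanSpace_fin,
          abs_of_nonneg (by positivity)]
      have h2 := measure_mono (μ := (volume : Measure (EuclideanSpace ℝ (Fin 2)))) himg
      rw [h1] at h2
      have h3 := ENNReal.toReal_mono hSfin h2
      rwa [ENNReal.toReal_mul, ENNReal.toReal_ofReal (by positivity)] at h3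
    have hsetsEq : {a | t < dist c a} ∩ Q = Q \ S := by
      ext a
      simp only [Set.mem_inter_iff, Set.mem_setOf_eq, Set.mem_diff, hS_def,
        mem_closedBall, not_and, not_le, dist_comm a c]
      tauto
    rw [hg_eq, hsetsEq, measure_diff hSsub hSmeas.nullMeasurableSet hSfin,
      ENNReal.toReal_sub_of_le (measure_mono hSsub) hvol_lt.ne]
    have hdivpow : t^2/r^2 = (t/r)^2 := (div_pow t r 2).symm
    rw [hdivpow]
    have : V * (1 - (t/r)^2) = V - (t/r)^2 * V := by ring
    rw [this]
    linarith [hSvol]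
  -- integrability of g on Ioc 0 r
  have hg_int : IntegrableOn g (Ioc 0 r) volume :=
    (AntitoneOn.integrableOn_isCompact isCompact_Icc (hg_anti.antitoneOn (Icc 0 r))).mono_set
      Ioc_subset_Icc_self
  have hpoly_int : IntegrableOn (fun t => V * (1 - t^2/r^2)) (Ioc 0 r) volume := by
    apply Continuous.integrableOn_Ioc
    fun_prop
  -- split the integral
  have hsplit : ∫ t in Ioi (0:ℝ), g t = ∫ t in Ioc (0:ℝ) r, g t := by
    have h0 : (∫ t in Ioi r, g t) = 0 :=
      setIntegral_eq_zero_of_forall_eq_zero fun t ht => hg_zero t (le_of_lt ht)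
    rw [← Ioc_union_Ioi_eq_Ioi hr_pos.le,
      setIntegral_union (Ioc_disjoint_Ioi le_rfl) measurableSet_Ioi hg_int
        (integrableOn_zero.congr_fun (fun t ht => (hg_zero t (le_of_lt ht)).symm)
          measurableSet_Ioi), h0, add_zero]
  -- compute the comparison integral
  have hdiam2r : Metric.diam Q = 2 * r := by rw [hr_def]; ring
  have hcomp : (∫ t in Ioc (0:ℝ) r, V * (1 - t^2/r^2)) = 1/3 * Metric.diam Q * V := by
    rw [← intervalIntegral.integral_of_le hr_pos.le, hdiam2r]
    have heq : (fun t : ℝ => V * (1 - t^2/r^2)) = fun t : ℝ => V - (V/r^2) * t^2 := by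
      funext t; ring
    rw [heq]
    rw [intervalIntegral.integral_sub intervalIntegrable_const
      ((intervalIntegral.intervalIntegrable_pow 2).const_mul _),
      intervalIntegral.integral_const, intervalIntegral.integral_const_mul,
      integral_pow, smul_eq_mul]
    have hrne : r ≠ 0 := hr_pos.ne'
    field_simp
    ring
  -- assemble the main bound
  have hmain : (∫ q in Q, dist c q) ≤ 1/3 * Metric.diam Q * V := by
    rw [hlayer, hsplit]
    calc (∫ t in Ioc (0:ℝ) r, g t) ≤ ∫ t in Ioc (0:ℝ) r, V * (1 - t^2/r^2) :=
          setIntegral_mono_on hg_int hpoly_int measurableSet_Ioc hkey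
      _ = 1/3 * Metric.diam Q * V := hcomp
  -- conclude
  have hbdd : BddBelow (Set.range fun p : EuclideanSpace ℝ (Fin 2) =>
      (∫ q in Q, dist p q) / (volume Q).toReal) := by
    refine ⟨0, ?_⟩
    rintro _ ⟨p, rfl⟩
    exact div_nonneg (integral_nonneg fun q => dist_nonneg) ENNReal.toReal_nonneg
  refine le_trans (ciInf_le hbdd c) ?_
  rw [← hV_def, div_le_iff₀ hV_pos]
  exact hmain
end

section
/- (Jung's theorem in the plane) Every planar set S of diameter Δ(S) is contained in a closed disk of radius Δ(S)/√3. -/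
open MeasureTheory Metric Real


lemma jung_key_ord (a b c d2 : ℝ) (ha : 0 ≤ a) (hab : a ≤ b) (hbc : b ≤ c)
    (hcd : c ≤ d2) (h3 : c ≤ a + b) :
    3*a*b*c ≤ d2*(2*a*b+2*b*c+2*c*a-a^2-b^2-c^2) := by
  have hQ : 0 ≤ 2*a*b+2*b*c+2*c*a-a^2-b^2-c^2 := by nlinarith
  have hf : 0 ≤ a*b - (a+b-c)^2 := by nlinarith
  nlinarith [mul_nonneg (sub_nonneg.2 hcd) hQ, mul_nonneg (ha.trans (hab.trans hbc)) hf]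

lemma jung_key (a b c d2 : ℝ) (ha : 0 ≤ a) (hb : 0 ≤ b) (hc : 0 ≤ c)
    (had : a ≤ d2) (hbd : b ≤ d2) (hcd : c ≤ d2)
    (h1 : a ≤ b + c) (h2 : b ≤ a + c) (h3 : c ≤ a + b) :
    3*a*b*c ≤ d2*(2*a*b+2*b*c+2*c*a-a^2-b^2-c^2) := by
  rcases le_total a b with h | h <;> rcases le_total b c with h' | h' <;>
    rcases le_total a c with h'' | h''
  all_goals
    first
    | (have := jung_key_ord a b c d2 (by linarith) (by linarith) (by linarith) (by linarith) (by linarith); linarith)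
    | (have := jung_key_ord a c b d2 (by linarith) (by linarith) (by linarith) (by linarith) (by linarith); linarith)
    | (have := jung_key_ord b a c d2 (by linarith) (by linarith) (by linarith) (by linarith) (by linarith); linarith)
    | (have := jung_key_ord b c a d2 (by linarith) (by linarith) (by linarith) (by linarith) (by linarith); linarith)
    | (have := jung_key_ord c a b d2 (by linarith) (by linarith) (by linarith) (by linarith) (by linarith); linarith)
    | (have := jung_key_ord c b a d2 (by linarith) (by linarith) (by linarith) (by linarith) (by linarith); linarith)

lemma jung_plane3 (x1 y1 x2 y2 x3 y3 d : ℝ) (hd : 0 ≤ d)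
    (h12 : (x1-x2)^2+(y1-y2)^2 ≤ d^2)
    (h13 : (x1-x3)^2+(y1-y3)^2 ≤ d^2)
    (h23 : (x2-x3)^2+(y2-y3)^2 ≤ d^2) :
    ∃ cx cy, (cx-x1)^2+(cy-y1)^2 ≤ d^2/3 ∧ (cx-x2)^2+(cy-y2)^2 ≤ d^2/3 ∧
      (cx-x3)^2+(cy-y3)^2 ≤ d^2/3 := by
  set a := (x2-x3)^2+(y2-y3)^2 with ha'
  set b := (x1-x3)^2+(y1-y3)^2 with hb'
  set c := (x1-x2)^2+(y1-y2)^2 with hc'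
  clear_value a b c
  have ha0 : 0 ≤ a := by rw [ha']; positivity
  have hb0 : 0 ≤ b := by rw [hb']; positivity
  have hc0 : 0 ≤ c := by rw [hc']; positivity
  by_cases hA : b + c ≤ a
  · refine ⟨(x2+x3)/2, (y2+y3)/2, ?_, ?_, ?_⟩
    · have e : ((x2+x3)/2 - x1)^2 + ((y2+y3)/2 - y1)^2 = (2*b+2*c-a)/4 := by
        simp only [ha', hb', hc']; ring
      rw [e]; linarith
    · have e : ((x2+x3)/2 - x2)^2 + ((y2+y3)/2 - y2)^2 = a/4 := by
        simp only [ha']; ring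
      rw [e]; linarith
    · have e : ((x2+x3)/2 - x3)^2 + ((y2+y3)/2 - y3)^2 = a/4 := by
        simp only [ha']; ring
      rw [e]; linarith
  by_cases hB : a + c ≤ b
  · refine ⟨(x1+x3)/2, (y1+y3)/2, ?_, ?_, ?_⟩
    · have e : ((x1+x3)/2 - x1)^2 + ((y1+y3)/2 - y1)^2 = b/4 := by
        simp only [hb']; ring
      rw [e]; linarith
    · have e : ((x1+x3)/2 - x2)^2 + ((y1+y3)/2 - y2)^2 = (2*a+2*c-b)/4 := by
        simp only [ha', hb', hc']; ring
      rw [e]; linarith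
    · have e : ((x1+x3)/2 - x3)^2 + ((y1+y3)/2 - y3)^2 = b/4 := by
        simp only [hb']; ring
      rw [e]; linarith
  by_cases hC : a + b ≤ c
  · refine ⟨(x1+x2)/2, (y1+y2)/2, ?_, ?_, ?_⟩
    · have e : ((x1+x2)/2 - x1)^2 + ((y1+y2)/2 - y1)^2 = c/4 := by
        simp only [hc']; ring
      rw [e]; linarith
    · have e : ((x1+x2)/2 - x2)^2 + ((y1+y2)/2 - y2)^2 = c/4 := by
        simp only [hc']; ring
      rw [e]; linarith
    · have e : ((x1+x2)/2 - x3)^2 + ((y1+y2)/2 - y3)^2 = (2*a+2*b-c)/4 := by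
        simp only [ha', hb', hc']; ring
      rw [e]; linarith
  push_neg at hA hB hC
  -- acute case: circumcenter
  set u1 := x2 - x1 with hu1
  set u2 := y2 - y1 with hu2
  set v1 := x3 - x1 with hv1
  set v2 := y3 - y1 with hv2
  set D := u1*v2 - u2*v1 with hD'
  clear_value u1 u2 v1 v2 D
  have hQ : 2*a*b+2*b*c+2*c*a-a^2-b^2-c^2 = 4*D^2 := by
    simp only [ha', hb', hc', hD', hu1, hu2, hv1, hv2]; ring
  have hQpos : 0 < 2*a*b+2*b*c+2*c*a-a^2-b^2-c^2 := by
    have hapos : 0 < a := by linarith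
    have hbpos : 0 < b := by linarith
    have hcpos : 0 < c := by linarith
    nlinarith [mul_pos hapos (by linarith : (0:ℝ) < b + c - a),
      mul_pos hbpos (by linarith : (0:ℝ) < a + c - b),
      mul_pos hcpos (by linarith : (0:ℝ) < a + b - c)]
  have hD2 : 0 < D^2 := by linarith [hQ ▸ hQpos]
  have hD : D ≠ 0 := by intro h; rw [h] at hD2; simp at hD2
  have hkey : 3*a*b*c ≤ d^2*(4*D^2) := by
    rw [← hQ]
    exact jung_key a b c (d^2) ha0 hb0 hc0 h23 h13 h12 hA.le hB.le hC.le
  set nu := u1^2 + u2^2 with hnu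
  set nv := v1^2 + v2^2 with hnv
  clear_value nu nv
  refine ⟨x1 + (nu*v2 - nv*u2)/(2*D), y1 + (nv*u1 - nu*v1)/(2*D), ?_, ?_, ?_⟩
  · have hR : (x1 + (nu*v2 - nv*u2)/(2*D) - x1)^2 + (y1 + (nv*u1 - nu*v1)/(2*D) - y1)^2
        = a*b*c/(4*D^2) := by
      field_simp
      simp only [ha', hb', hc', hnu, hnv, hD', hu1, hu2, hv1, hv2]
      ring
    rw [hR, div_le_div_iff₀ (by positivity) (by norm_num)]
    linarith
  · have hR : (x1 + (nu*v2 - nv*u2)/(2*D) - x2)^2 + (y1 + (nv*u1 - nu*v1)/(2*D) - y2)^2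
        = a*b*c/(4*D^2) := by
      field_simp
      simp only [ha', hb', hc', hnu, hnv, hD', hu1, hu2, hv1, hv2]
      ring
    rw [hR, div_le_div_iff₀ (by positivity) (by norm_num)]
    linarith
  · have hR : (x1 + (nu*v2 - nv*u2)/(2*D) - x3)^2 + (y1 + (nv*u1 - nu*v1)/(2*D) - y3)^2
        = a*b*c/(4*D^2) := by
      field_simp
      simp only [ha', hb', hc', hnu, hnv, hD', hu1, hu2, hv1, hv2]
      ring
    rw [hR, div_le_div_iff₀ (by positivity) (by norm_num)]
    linarith



lemma dist_eq_plane (x y : EuclideanSpace ℝ (Fin 2)) :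
    dist x y = Real.sqrt ((x 0 - y 0)^2 + (x 1 - y 1)^2) := by
  rw [EuclideanSpace.dist_eq, Fin.sum_univ_two]
  simp [Real.dist_eq, sq_abs]

lemma dist_sq_le (x y : EuclideanSpace ℝ (Fin 2)) (d : ℝ) (hd : 0 ≤ d)
    (h : dist x y ≤ d) : (x 0 - y 0)^2 + (x 1 - y 1)^2 ≤ d^2 := by
  rw [dist_eq_plane] at h
  nlinarith [Real.sq_sqrt (by positivity : (0:ℝ) ≤ (x 0 - y 0)^2 + (x 1 - y 1)^2),
    Real.sqrt_nonneg ((x 0 - y 0)^2 + (x 1 - y 1)^2)]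

lemma le_dist_of_sq (x y : EuclideanSpace ℝ (Fin 2)) (d : ℝ) (hd : 0 ≤ d)
    (h : (x 0 - y 0)^2 + (x 1 - y 1)^2 ≤ d^2/3) : dist x y ≤ d / Real.sqrt 3 := by
  rw [dist_eq_plane]
  have h3 : d / Real.sqrt 3 = Real.sqrt (d^2/3) := by
    rw [Real.sqrt_div (by positivity : (0:ℝ) ≤ d^2), Real.sqrt_sq hd]
  rw [h3]
  exact Real.sqrt_le_sqrt h

lemma jung_three (p q s : EuclideanSpace ℝ (Fin 2)) (d : ℝ) (hd : 0 ≤ d)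
    (h1 : dist p q ≤ d) (h2 : dist p s ≤ d) (h3 : dist q s ≤ d) :
    ∃ c : EuclideanSpace ℝ (Fin 2),
      dist c p ≤ d / Real.sqrt 3 ∧ dist c q ≤ d / Real.sqrt 3 ∧ dist c s ≤ d / Real.sqrt 3 := by
  obtain ⟨cx, cy, e1, e2, e3⟩ := jung_plane3 (p 0) (p 1) (q 0) (q 1) (s 0) (s 1) d hd
    (dist_sq_le p q d hd h1) (dist_sq_le p s d hd h2) (dist_sq_le q s d hd h3)
  refine ⟨(WithLp.equiv 2 (Fin 2 → ℝ)).symm ![cx, cy], ?_, ?_, ?_⟩ <;>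
    · apply le_dist_of_sq _ _ _ hd
      simpa using ‹_›



/-- Jung's theorem in the plane: every bounded planar set `S` is contained in a closed
disk of radius `Δ(S)/√3`. -/
theorem jung_plane (S : Set (EuclideanSpace ℝ (Fin 2))) (hS : Bornology.IsBounded S) :
    ∃ c : EuclideanSpace ℝ (Fin 2), S ⊆ Metric.closedBall c (Metric.diam S / Real.sqrt 3) := by
  classical
  set r := Metric.diam S / Real.sqrt 3 with hr
  have hd0 : 0 ≤ Metric.diam S := Metric.diam_nonneg
  have hhelly := Convex.helly_theorem_compact' (𝕜 := ℝ) (ι := ↥S)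
    (F := fun p => Metric.closedBall (p : EuclideanSpace ℝ (Fin 2)) r)
    (fun i => convex_closedBall _ _) (fun i => isCompact_closedBall _ _) ?_
  · obtain ⟨c, hc⟩ := hhelly
    refine ⟨c, fun p hp => ?_⟩
    have := Set.mem_iInter.1 hc ⟨p, hp⟩
    rw [Metric.mem_closedBall] at this ⊢
    rwa [dist_comm]
  · intro I hI
    rw [finrank_euclideanSpace_fin] at hI
    rcases I.eq_empty_or_nonempty with rfl | ⟨p, hp⟩
    · simp
    · -- extract up to three points covering I
      obtain ⟨q, hq, s, hs, hcov⟩ : ∃ q ∈ I, ∃ s ∈ I, ∀ i ∈ I, i = p ∨ i = q ∨ i = s := by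
        rcases (I.erase p).eq_empty_or_nonempty with h1 | ⟨q, hq⟩
        · exact ⟨p, hp, p, hp, fun i hi => by
            by_cases h : i = p
            · exact Or.inl h
            · exact absurd (Finset.mem_erase.2 ⟨h, hi⟩) (h1 ▸ Finset.notMem_empty i)⟩
        · rcases ((I.erase p).erase q).eq_empty_or_nonempty with h2 | ⟨s, hs⟩
          · exact ⟨q, Finset.mem_of_mem_erase hq, q, Finset.mem_of_mem_erase hq,
              fun i hi => by
                by_cases h : i = p
                · exact Or.inl h
                by_cases h' : i = q
                · exact Or.inr (Or.inl h')
                · exact absurd (Finset.mem_erase.2 ⟨h', Finset.mem_erase.2 ⟨h, hi⟩⟩)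
                    (h2 ▸ Finset.notMem_empty i)⟩
          · refine ⟨q, Finset.mem_of_mem_erase hq,
              s, Finset.mem_of_mem_erase (Finset.mem_of_mem_erase hs), fun i hi => ?_⟩
            by_cases h : i = p
            · exact Or.inl h
            by_cases h' : i = q
            · exact Or.inr (Or.inl h')
            -- now i ∈ (I.erase p).erase q which has card ≤ 1 and contains s
            have hi2 : i ∈ (I.erase p).erase q := Finset.mem_erase.2 ⟨h', Finset.mem_erase.2 ⟨h, hi⟩⟩
            have hcard : ((I.erase p).erase q).card ≤ 1 := by
              have c1 := Finset.card_erase_of_mem hp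
              have c2 := Finset.card_erase_of_mem hq
              omega
            exact Or.inr (Or.inr (Finset.card_le_one.1 hcard i hi2 s hs))
      have hdle : ∀ a b : ↥S, dist (a : EuclideanSpace ℝ (Fin 2)) b ≤ Metric.diam S :=
        fun a b => Metric.dist_le_diam_of_mem hS a.2 b.2
      obtain ⟨c, h1, h2, h3⟩ := jung_three p q s (Metric.diam S) hd0
        (hdle p q) (hdle p s) (hdle q s)
      refine ⟨c, Set.mem_iInter₂.2 fun i hi => ?_⟩
      rw [Metric.mem_closedBall]
      rcases hcov i hi with rfl | rfl | rfl
      · exact h1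
      · exact h2
      · exact h3
end

section
/- Let Q be a convex body in the plane with diameter D, and let Ω be its smallest enclosing disk with center o and radius R. If r is the radius of the largest disk centered at o contained in Q, then r ≥ √(R² − D²/4). -/
open MeasureTheory Metric Real

open Filter


set_option maxHeartbeats 1000000 in
theorem core_ineq (R t t' m' a b c d : ℝ)
    (hR : 0 < R) (ht0 : 0 ≤ t) (htt' : t < t') (ht'R : t' < R)
    (hm2 : m' ^ 2 = R ^ 2 - t' ^ 2) (hm0 : 0 ≤ m')
    (hz : a ^ 2 + b ^ 2 = R ^ 2) (hq : c ^ 2 + d ^ 2 = R ^ 2)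
    (hat : a ≤ t) (ha0 : 0 ≤ a) (hb0 : 0 ≤ b) (hct : c ≤ t)
    (hw : (b * (2 * t' ^ 2 - R ^ 2) + 2 * a * t' * m') * c
        + (a * (R ^ 2 - 2 * t' ^ 2) + 2 * b * t' * m') * d ≤ 0) :
    a * c + b * d ≤ 2 * t' ^ 2 - R ^ 2 := by
  obtain ⟨C, hC⟩ : ∃ C : ℝ, C = 2 * t' ^ 2 - R ^ 2 := ⟨_, rfl⟩
  obtain ⟨Sn, hSn⟩ : ∃ Sn : ℝ, Sn = 2 * t' * m' := ⟨_, rfl⟩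
  obtain ⟨P, hP⟩ : ∃ P : ℝ, P = a * c + b * d := ⟨_, rfl⟩
  obtain ⟨S, hS⟩ : ∃ S : ℝ, S = a * d - b * c := ⟨_, rfl⟩
  rw [← hP, ← hC]
  have ht'0 : 0 < t' := lt_of_le_of_lt ht0 htt'
  have hR2 : (0:ℝ) < R ^ 2 := by positivity
  have hRt' : 0 < R ^ 2 - t' ^ 2 := by
    have h := mul_pos (sub_pos.2 ht'R) (show (0:ℝ) < R + t' by linarith)
    have e : (R - t') * (R + t') = R ^ 2 - t' ^ 2 := by ring
    linarith [h, e]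
  have hm'0 : 0 < m' := by
    rcases hm0.lt_or_eq with h | h
    · exact h
    · exfalso; rw [← h] at hm2; linarith [hm2, hRt']
  have hSn0 : 0 < Sn := by rw [hSn]; positivity
  have hR4 : (0:ℝ) < R ^ 4 := by positivity
  have htt2 : t ^ 2 < t' ^ 2 := by linarith [mul_self_lt_mul_self ht0 htt']
  have hPS : P ^ 2 + S ^ 2 = R ^ 4 := by
    have h1 : P ^ 2 + S ^ 2 = (a ^ 2 + b ^ 2) * (c ^ 2 + d ^ 2) := by rw [hP, hS]; ring
    rw [h1, hz, hq]; ring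
  have hCS : C ^ 2 + Sn ^ 2 = R ^ 4 := by
    rw [hC, hSn]; linear_combination (4 * t' ^ 2) * hm2
  have hw' : Sn * P ≤ C * S := by
    have h1 : Sn * P - C * S = (b * (2 * t' ^ 2 - R ^ 2) + 2 * a * t' * m') * c
        + (a * (R ^ 2 - 2 * t' ^ 2) + 2 * b * t' * m') * d := by
      rw [hSn, hP, hC, hS]; ring
    linarith [h1, hw]
  have hc' : a * P - b * S ≤ t * R ^ 2 := by
    have h1 : a * P - b * S = (a ^ 2 + b ^ 2) * c := by rw [hP, hS]; ring
    rw [h1, hz]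
    calc R ^ 2 * c ≤ R ^ 2 * t := mul_le_mul_of_nonneg_left hct (sq_nonneg R)
      _ = t * R ^ 2 := mul_comm _ _
  have hb2 : R ^ 2 - t ^ 2 ≤ b ^ 2 := by
    linarith [mul_self_le_mul_self ha0 hat, hz]
  -- goal : P ≤ C
  rcases le_or_gt C 0 with hCneg | hCpos
  · rcases le_or_gt S 0 with hS0 | hS0
    · rcases le_or_gt 0 P with hP0 | hP0
      · -- middle case: contradiction
        exfalso
        have haP : 0 ≤ a * P := mul_nonneg ha0 hP0
        have h1 : b * (-S) ≤ t * R ^ 2 := by linarith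
        have h2 : 0 ≤ Sn * P := mul_nonneg hSn0.le hP0
        have h3 : Sn ^ 2 * P ^ 2 ≤ C ^ 2 * S ^ 2 := by
          calc Sn ^ 2 * P ^ 2 = (Sn * P) * (Sn * P) := by ring
            _ ≤ (C * S) * (C * S) := mul_self_le_mul_self h2 hw'
            _ = C ^ 2 * S ^ 2 := by ring
        have h4 : Sn ^ 2 ≤ S ^ 2 := by
          have e2 : Sn ^ 2 * P ^ 2 + Sn ^ 2 * S ^ 2 = Sn ^ 2 * R ^ 4 := by
            linear_combination Sn ^ 2 * hPS
          have e3 : C ^ 2 * S ^ 2 + Sn ^ 2 * S ^ 2 = R ^ 4 * S ^ 2 := by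
            linear_combination S ^ 2 * hCS
          have e4 : Sn ^ 2 * R ^ 4 ≤ S ^ 2 * R ^ 4 := by linarith [h3, e2, e3]
          exact le_of_mul_le_mul_right e4 hR4
        have h5 : b ^ 2 * S ^ 2 ≤ t ^ 2 * R ^ 4 := by
          have hbS : 0 ≤ b * (-S) := mul_nonneg hb0 (by linarith)
          have h5' := mul_self_le_mul_self hbS h1
          calc b ^ 2 * S ^ 2 = (b * (-S)) * (b * (-S)) := by ring
            _ ≤ (t * R ^ 2) * (t * R ^ 2) := h5'
            _ = t ^ 2 * R ^ 4 := by ring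
        have key : t ^ 2 * R ^ 4 < (R ^ 2 - t ^ 2) * Sn ^ 2 := by
          have e : Sn ^ 2 = 4 * t' ^ 2 * (R ^ 2 - t' ^ 2) := by
            rw [hSn]; linear_combination (4 * t' ^ 2) * hm2
          have hRC : 0 ≤ R ^ 2 - 2 * t' ^ 2 := by rw [hC] at hCneg; linarith
          have s1 : t ^ 2 * R ^ 4 < t' ^ 2 * R ^ 4 := mul_lt_mul_of_pos_right htt2 hR4
          have s2 : t' ^ 2 * R ^ 4 ≤ t' ^ 2 * (4 * (R ^ 2 - t' ^ 2) ^ 2) := by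
            have hx : R ^ 2 * R ^ 2 ≤ (2 * (R ^ 2 - t' ^ 2)) * (2 * (R ^ 2 - t' ^ 2)) :=
              mul_self_le_mul_self (sq_nonneg R) (by linarith)
            have hx2 : R ^ 4 ≤ 4 * (R ^ 2 - t' ^ 2) ^ 2 := by linarith [hx]
            exact mul_le_mul_of_nonneg_left hx2 (sq_nonneg t')
          have s3 : t' ^ 2 * (4 * (R ^ 2 - t' ^ 2) ^ 2) ≤ (R ^ 2 - t ^ 2) * (4 * t' ^ 2 * (R ^ 2 - t' ^ 2)) := by
            have hf : 0 ≤ 4 * t' ^ 2 * (R ^ 2 - t' ^ 2) := by positivity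
            have hs := mul_le_mul_of_nonneg_left (show R ^ 2 - t' ^ 2 ≤ R ^ 2 - t ^ 2 by linarith) hf
            linarith [hs]
          rw [e]; linarith
        have h6 : (R ^ 2 - t ^ 2) * Sn ^ 2 ≤ (R ^ 2 - t ^ 2) * S ^ 2 :=
          mul_le_mul_of_nonneg_left h4 (by linarith)
        have h7 : (R ^ 2 - t ^ 2) * S ^ 2 ≤ b ^ 2 * S ^ 2 :=
          mul_le_mul_of_nonneg_right hb2 (sq_nonneg S)
        linarith
      · -- P < 0, S ≤ 0
        by_contra hcon
        push_neg at hcon  -- C < P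
        have hRP : 0 < R ^ 2 - P := by linarith
        have hnS : 0 ≤ -S := by linarith
        have hPgt : 2 * t ^ 2 - R ^ 2 < P := by rw [hC] at hcon; linarith
        have claim : t * (R ^ 2 - P) < b * (-S) := by
          have hS2 : S ^ 2 = (R ^ 2 - P) * (R ^ 2 + P) := by linear_combination hPS
          have hstep : t ^ 2 * (R ^ 2 - P) < (R ^ 2 - t ^ 2) * (R ^ 2 + P) := by
            have hp := mul_pos hR2 (show (0:ℝ) < R ^ 2 + P - 2 * t ^ 2 by linarith)
            linarith [hp]
          have hstep2 : t ^ 2 * (R ^ 2 - P) * (R ^ 2 - P) < (R ^ 2 - t ^ 2) * (R ^ 2 + P) * (R ^ 2 - P) :=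
            mul_lt_mul_of_pos_right hstep hRP
          have hBB : (R ^ 2 - t ^ 2) * S ^ 2 ≤ b ^ 2 * S ^ 2 :=
            mul_le_mul_of_nonneg_right hb2 (sq_nonneg S)
          have e5 : (R ^ 2 - t ^ 2) * S ^ 2 = (R ^ 2 - t ^ 2) * ((R ^ 2 - P) * (R ^ 2 + P)) := by
            rw [hS2]
          have hsq : (t * (R ^ 2 - P)) ^ 2 < (b * (-S)) ^ 2 := by
            linarith [hstep2, hBB, e5]
          have h2 : 0 ≤ b * (-S) := mul_nonneg hb0 hnS
          exact lt_of_pow_lt_pow_left₀ 2 h2 hsq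
        have h6 : 0 ≤ (t - a) * (-P) := mul_nonneg (by linarith) (by linarith)
        linarith [claim, hc', h6]
    · -- S > 0
      have hCS0 : C * S ≤ 0 := mul_nonpos_of_nonpos_of_nonneg hCneg hS0.le
      have hPneg : P ≤ 0 := by
        by_contra hp
        push_neg at hp
        linarith [mul_pos hSn0 hp, hw', hCS0]
      have h2 : (-C) * S ≤ Sn * (-P) := by linarith [hw']
      have h3 : ((-C) * S) * ((-C) * S) ≤ (Sn * (-P)) * (Sn * (-P)) :=
        mul_self_le_mul_self (mul_nonneg (by linarith) hS0.le) h2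
      have h3' : C ^ 2 * S ^ 2 ≤ Sn ^ 2 * P ^ 2 := by
        calc C ^ 2 * S ^ 2 = ((-C) * S) * ((-C) * S) := by ring
          _ ≤ (Sn * (-P)) * (Sn * (-P)) := h3
          _ = Sn ^ 2 * P ^ 2 := by ring
      have h4 : C ^ 2 ≤ P ^ 2 := by
        have e2 : C ^ 2 * P ^ 2 + C ^ 2 * S ^ 2 = C ^ 2 * R ^ 4 := by
          linear_combination C ^ 2 * hPS
        have e3 : C ^ 2 * P ^ 2 + Sn ^ 2 * P ^ 2 = R ^ 4 * P ^ 2 := by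
          linear_combination P ^ 2 * hCS
        have e4 : C ^ 2 * R ^ 4 ≤ P ^ 2 * R ^ 4 := by linarith [h3', e2, e3]
        exact le_of_mul_le_mul_right e4 hR4
      have h5 : |C| ≤ |P| := by
        rw [← Real.sqrt_sq_eq_abs, ← Real.sqrt_sq_eq_abs]
        exact Real.sqrt_le_sqrt h4
      rw [abs_of_nonpos hCneg, abs_of_nonpos hPneg] at h5
      linarith
  · -- 0 < C
    by_contra hcon
    push_neg at hcon
    have hP0 : 0 < P := lt_trans hCpos hcon
    have hS0 : 0 < S := by
      by_contra hs
      push_neg at hs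
      have hcs : C * S ≤ 0 := mul_nonpos_of_nonneg_of_nonpos hCpos.le hs
      linarith [mul_pos hSn0 hP0, hw']
    have h3 : (Sn * P) * (Sn * P) ≤ (C * S) * (C * S) :=
      mul_self_le_mul_self (mul_nonneg hSn0.le hP0.le) hw'
    have h3' : Sn ^ 2 * P ^ 2 ≤ C ^ 2 * S ^ 2 := by
      calc Sn ^ 2 * P ^ 2 = (Sn * P) * (Sn * P) := by ring
        _ ≤ (C * S) * (C * S) := h3
        _ = C ^ 2 * S ^ 2 := by ring
    have h4 : P ^ 2 ≤ C ^ 2 := by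
      have e2 : Sn ^ 2 * P ^ 2 + Sn ^ 2 * S ^ 2 = Sn ^ 2 * R ^ 4 := by
        linear_combination Sn ^ 2 * hPS
      have e3 : C ^ 2 * S ^ 2 + Sn ^ 2 * S ^ 2 = R ^ 4 * S ^ 2 := by
        linear_combination S ^ 2 * hCS
      have e4 : Sn ^ 2 * R ^ 4 ≤ S ^ 2 * R ^ 4 := by linarith [h3', e2, e3]
      have h4' : Sn ^ 2 ≤ S ^ 2 := le_of_mul_le_mul_right e4 hR4
      linarith [hPS, hCS, h4']
    have h5 : |P| ≤ |C| := by
      rw [← Real.sqrt_sq_eq_abs, ← Real.sqrt_sq_eq_abs]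
      exact Real.sqrt_le_sqrt h4
    rw [abs_of_pos hP0, abs_of_pos hCpos] at h5
    linarith




theorem far_point {E : Type*} [NormedAddCommGroup E] [InnerProductSpace ℝ E]
    (Q : Set E) (hQc : IsCompact Q) (hQne : Q.Nonempty)
    (o : E) (R : ℝ)
    (henc : Q ⊆ Metric.closedBall o R)
    (hmin : ∀ o' R', Q ⊆ Metric.closedBall o' R' → R ≤ R')
    (w : E) (hw : ‖w‖ = 1) :
    ∃ y ∈ Q, dist y o = R ∧ (inner ℝ w (y - o) : ℝ) ≤ 0 := by
  have hR0 : 0 ≤ R := by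
    obtain ⟨y, hy⟩ := hQne
    exact le_trans dist_nonneg (henc hy)
  set T : ℕ → Set E := fun n =>
    Q ∩ ({y | R - 1 / (n + 1) ≤ dist y o} ∩ {y | (inner ℝ w (y - o) : ℝ) ≤ 1 / (n + 1)}) with hT
  have hmono : ∀ {m n : ℕ}, m ≤ n → T n ⊆ T m := by
    intro m n hmn y hy
    obtain ⟨hyQ, h1, h2⟩ := hy
    have hle : 1 / ((n:ℝ) + 1) ≤ 1 / ((m:ℝ) + 1) := by
      apply one_div_le_one_div_of_le
      · positivity
      · have : (m:ℝ) ≤ (n:ℝ) := by exact_mod_cast hmn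
        linarith
    have h1 : R - 1 / ((n:ℝ) + 1) ≤ dist y o := h1
    have h2 : (inner ℝ w (y - o) : ℝ) ≤ 1 / ((n:ℝ) + 1) := h2
    exact ⟨hyQ, by simp only [Set.mem_setOf_eq]; linarith,
      by simp only [Set.mem_setOf_eq]; linarith⟩
  have hA : ∀ n : ℕ, IsClosed ({y : E | R - 1 / (n + 1) ≤ dist y o} ∩
      {y | (inner ℝ w (y - o) : ℝ) ≤ 1 / (n + 1)}) := by
    intro n
    apply IsClosed.inter
    · exact isClosed_le continuous_const (continuous_id.dist continuous_const)
    · exact isClosed_le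
        ((continuous_const.inner (continuous_id.sub continuous_const)) :
          Continuous fun y : E => (inner ℝ w (y - o) : ℝ)) continuous_const
  have hclosed : ∀ n, IsClosed (T n) := fun n => hQc.isClosed.inter (hA n)
  have hcompact : ∀ n, IsCompact (T n) := fun n => hQc.inter_right (hA n)
  have hne : ∀ n, (T n).Nonempty := by
    intro n
    set ε : ℝ := 1 / ((n:ℝ) + 1) with hε
    have hε0 : 0 < ε := by positivity
    obtain ⟨y, hyQ, hymax⟩ := hQc.exists_isMaxOn hQne
      ((continuous_id.dist continuous_const).continuousOn :
        ContinuousOn (fun y => dist y (o + ε • w)) Q)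
    have hsub : Q ⊆ Metric.closedBall (o + ε • w) (dist y (o + ε • w)) := by
      intro y' hy'
      exact mem_closedBall.2 (hymax hy')
    have hRy : R ≤ dist y (o + ε • w) := hmin _ _ hsub
    have hdisto : dist o (o + ε • w) = ε := by
      rw [dist_comm, dist_eq_norm, add_sub_cancel_left, norm_smul, hw, Real.norm_eq_abs,
        abs_of_pos hε0, mul_one]
    have h1 : R - ε ≤ dist y o := by
      have htri := dist_triangle y o (o + ε • w)
      rw [hdisto] at htri
      linarith
    have hyR : dist y o ≤ R := henc hyQ
    have h2 : (inner ℝ w (y - o) : ℝ) ≤ ε := by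
      have hexp : dist y (o + ε • w) ^ 2
          = dist y o ^ 2 - 2 * (ε * inner ℝ (y - o) w) + ε ^ 2 := by
        rw [dist_eq_norm, show y - (o + ε • w) = (y - o) - ε • w by abel,
          norm_sub_sq_real, real_inner_smul_right, norm_smul, hw, Real.norm_eq_abs,
          abs_of_pos hε0, mul_one, dist_eq_norm]
      have hsq : R ^ 2 ≤ dist y (o + ε • w) ^ 2 := pow_le_pow_left₀ hR0 hRy 2
      have hsq2 : dist y o ^ 2 ≤ R ^ 2 := pow_le_pow_left₀ dist_nonneg hyR 2
      have hX : 2 * ε * (inner ℝ (y - o) w : ℝ) ≤ ε * ε := by linarith [hexp, hsq, hsq2]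
      rw [real_inner_comm]
      nlinarith [hX, hε0, mul_pos hε0 hε0]
    exact ⟨y, hyQ, h1, h2⟩
  obtain ⟨y, hy⟩ := IsCompact.nonempty_iInter_of_directed_nonempty_isCompact_isClosed T
    (fun i j => ⟨max i j, hmono (le_max_left i j), hmono (le_max_right i j)⟩)
    hne hcompact hclosed
  have hyn : ∀ n : ℕ, y ∈ T n := fun n => Set.mem_iInter.1 hy n
  have hyQ : y ∈ Q := (hyn 0).1
  refine ⟨y, hyQ, ?_, ?_⟩
  · refine le_antisymm (henc hyQ) ?_
    have htends : Tendsto (fun n : ℕ => R - 1 / ((n:ℝ) + 1)) atTop (nhds R) := by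
      have := tendsto_one_div_add_atTop_nhds_zero_nat (𝕜 := ℝ)
      simpa using tendsto_const_nhds.sub this
    exact le_of_tendsto htends (Filter.Eventually.of_forall fun n => (hyn n).2.1)
  · have htends : Tendsto (fun n : ℕ => 1 / ((n:ℝ) + 1)) atTop (nhds 0) :=
      tendsto_one_div_add_atTop_nhds_zero_nat
    exact ge_of_tendsto htends (Filter.Eventually.of_forall fun n => (hyn n).2.2)


noncomputable def perp2 (u : EuclideanSpace ℝ (Fin 2)) : EuclideanSpace ℝ (Fin 2) :=
  (WithLp.equiv 2 (Fin 2 → ℝ)).symm ![-u 1, u 0]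

theorem inner_two (x y : EuclideanSpace ℝ (Fin 2)) :
    (inner ℝ x y : ℝ) = x 0 * y 0 + x 1 * y 1 := by
  simp [PiLp.inner_apply, Fin.sum_univ_two, RCLike.inner_apply, mul_comm]

theorem perp2_zero (u : EuclideanSpace ℝ (Fin 2)) : perp2 u 0 = -u 1 := rfl
theorem perp2_one (u : EuclideanSpace ℝ (Fin 2)) : perp2 u 1 = u 0 := rfl

theorem coord_sq (u : EuclideanSpace ℝ (Fin 2)) (hu : ‖u‖ = 1) :
    u 0 ^ 2 + u 1 ^ 2 = 1 := by
  have h := real_inner_self_eq_norm_sq u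
  rw [hu, inner_two] at h
  linarith [h]

theorem parseval2 (u : EuclideanSpace ℝ (Fin 2)) (hu : ‖u‖ = 1)
    (x y : EuclideanSpace ℝ (Fin 2)) :
    (inner ℝ x y : ℝ) = (inner ℝ u x : ℝ) * (inner ℝ u y : ℝ)
      + (inner ℝ (perp2 u) x : ℝ) * (inner ℝ (perp2 u) y : ℝ) := by
  have h := coord_sq u hu
  rw [inner_two, inner_two, inner_two, inner_two, inner_two, perp2_zero, perp2_one]
  linear_combination (-(x 0 * y 0 + x 1 * y 1)) * h






set_option maxHeartbeats 2000000 in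
/-- Let `Q` be a convex body in the plane with diameter `D`, and let the closed disk of
center `o` and radius `R` be its smallest enclosing disk. Then the closed disk centered
at `o` of radius `√(R² − D²/4)` is contained in `Q`; that is, the radius `r` of the
largest disk centered at `o` contained in `Q` satisfies `r ≥ √(R² − D²/4)`. -/
theorem inradius_at_circumcenter (Q : Set (EuclideanSpace ℝ (Fin 2)))
    (hQc : IsCompact Q) (hQconv : Convex ℝ Q) (hQint : (interior Q).Nonempty)
    (D : ℝ) (hD : D = Metric.diam Q)
    (o : EuclideanSpace ℝ (Fin 2)) (R : ℝ)
    (henc : Q ⊆ Metric.closedBall o R)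
    (hmin : ∀ (o' : EuclideanSpace ℝ (Fin 2)) (R' : ℝ), Q ⊆ Metric.closedBall o' R' → R ≤ R') :
    Metric.closedBall o (Real.sqrt (R ^ 2 - D ^ 2 / 4)) ⊆ Q := by
  intro x hx
  by_contra hxQ
  obtain ⟨z0, hz0int⟩ := hQint
  have hz0Q : z0 ∈ Q := interior_subset hz0int
  have hQne : Q.Nonempty := ⟨z0, hz0Q⟩
  obtain ⟨s, hs⟩ : ∃ s : ℝ, s = Real.sqrt (R ^ 2 - D ^ 2 / 4) := ⟨_, rfl⟩
  have hxs : dist x o ≤ s := by rw [hs]; exact Metric.mem_closedBall.1 hx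
  -- separation
  obtain ⟨f, cc, hfQ, hfx⟩ := geometric_hahn_banach_closed_point hQconv hQc.isClosed hxQ
  obtain ⟨g, hgdef⟩ : ∃ g, g = (InnerProductSpace.toDual ℝ (EuclideanSpace ℝ (Fin 2))).symm f :=
    ⟨_, rfl⟩
  have hg : ∀ y, (inner ℝ g y : ℝ) = f y := by
    intro y; rw [hgdef]; exact InnerProductSpace.toDual_symm_apply
  have hgne : g ≠ 0 := by
    intro h
    have h1 := hg z0
    have h2 := hg x
    rw [h] at h1 h2
    simp only [inner_zero_left] at h1 h2
    linarith [hfQ z0 hz0Q, hfx]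
  have hgpos : 0 < ‖g‖ := norm_pos_iff.2 hgne
  obtain ⟨u, hu_def⟩ : ∃ u, u = ‖g‖⁻¹ • g := ⟨_, rfl⟩
  have hu : ‖u‖ = 1 := by rw [hu_def]; exact norm_smul_inv_norm hgne
  obtain ⟨t, ht_def⟩ : ∃ t : ℝ, t = ‖g‖⁻¹ * cc - (inner ℝ u o : ℝ) := ⟨_, rfl⟩
  have hinner_u : ∀ y : EuclideanSpace ℝ (Fin 2),
      (inner ℝ u (y - o) : ℝ) = ‖g‖⁻¹ * f y - (inner ℝ u o : ℝ) := by
    intro y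
    rw [inner_sub_right, hu_def, real_inner_smul_left, real_inner_smul_left, hg]
  have hQt : ∀ y ∈ Q, (inner ℝ u (y - o) : ℝ) < t := by
    intro y hy
    have h2 := mul_lt_mul_of_pos_left (hfQ y hy) (inv_pos.2 hgpos)
    rw [hinner_u y, ht_def]
    linarith
  have hxt : t < s := by
    have h2 := mul_lt_mul_of_pos_left hfx (inv_pos.2 hgpos)
    have h3 : (inner ℝ u (x - o) : ℝ) ≤ dist x o := by
      have h4 := real_inner_le_norm u (x - o)
      rw [hu, dist_eq_norm] at *
      linarith
    rw [ht_def]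
    rw [hinner_u x] at h3
    linarith
  -- far point in direction -u
  obtain ⟨z, hzQ, hzR, hza⟩ := far_point Q hQc hQne o R henc hmin (-u)
    (by rw [norm_neg, hu])
  rw [inner_neg_left] at hza
  have ha0 : (0:ℝ) ≤ inner ℝ u (z - o) := by linarith
  have hR0 : 0 ≤ R := hzR ▸ dist_nonneg
  have ht0 : 0 < t := lt_of_le_of_lt ha0 (hQt z hzQ)
  have hs0 : 0 < s := ht0.trans hxt
  have hargpos : 0 < R ^ 2 - D ^ 2 / 4 := Real.sqrt_pos.1 (hs ▸ hs0)
  have hs2 : s ^ 2 = R ^ 2 - D ^ 2 / 4 := by rw [hs]; exact Real.sq_sqrt hargpos.le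
  have hsR : s ≤ R := by
    have h1 : s ^ 2 ≤ R ^ 2 := by linarith [sq_nonneg D]
    have h2 := Real.sqrt_le_sqrt h1
    rwa [Real.sqrt_sq hs0.le, Real.sqrt_sq hR0] at h2
  have hRpos : 0 < R := lt_of_lt_of_le hs0 hsR
  -- parameters t', m'
  obtain ⟨t', ht'def⟩ : ∃ t' : ℝ, t' = (t + s) / 2 := ⟨_, rfl⟩
  have htt' : t < t' := by rw [ht'def]; linarith
  have ht's : t' < s := by rw [ht'def]; linarith
  have ht'R : t' < R := lt_of_lt_of_le ht's hsR
  have ht'0 : 0 < t' := ht0.trans htt'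
  obtain ⟨m', hm'def⟩ : ∃ m' : ℝ, m' = Real.sqrt (R ^ 2 - t' ^ 2) := ⟨_, rfl⟩
  have hm2 : m' ^ 2 = R ^ 2 - t' ^ 2 := by
    rw [hm'def]
    exact Real.sq_sqrt (by linarith [mul_self_lt_mul_self ht'0.le ht'R])
  have hm0 : 0 ≤ m' := by rw [hm'def]; exact Real.sqrt_nonneg _
  -- perpendicular direction v with b ≥ 0
  obtain ⟨v, hvdef⟩ : ∃ v, v = if (0:ℝ) ≤ inner ℝ (perp2 u) (z - o) then perp2 u else -perp2 u :=
    ⟨_, rfl⟩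
  have hb0 : (0:ℝ) ≤ inner ℝ v (z - o) := by
    by_cases hcase : (0:ℝ) ≤ inner ℝ (perp2 u) (z - o)
    · rw [hvdef, if_pos hcase]; exact hcase
    · rw [hvdef, if_neg hcase, inner_neg_left]; push_neg at hcase; linarith
  have hpar : ∀ p q : EuclideanSpace ℝ (Fin 2),
      (inner ℝ p q : ℝ) = (inner ℝ u p : ℝ) * (inner ℝ u q : ℝ)
        + (inner ℝ v p : ℝ) * (inner ℝ v q : ℝ) := by
    intro p q
    by_cases hcase : (0:ℝ) ≤ inner ℝ (perp2 u) (z - o)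
    · rw [hvdef, if_pos hcase]; exact parseval2 u hu p q
    · rw [hvdef, if_neg hcase]
      simp only [inner_neg_left]
      rw [parseval2 u hu p q]; ring
  have huu : (inner ℝ u u : ℝ) = 1 := by
    rw [real_inner_self_eq_norm_sq, hu]; norm_num
  have hupv : (inner ℝ u (perp2 u) : ℝ) = 0 := by
    rw [inner_two, perp2_zero, perp2_one]; ring
  have huv : (inner ℝ u v : ℝ) = 0 := by
    by_cases hcase : (0:ℝ) ≤ inner ℝ (perp2 u) (z - o)
    · rw [hvdef, if_pos hcase]; exact hupv
    · rw [hvdef, if_neg hcase, inner_neg_right, hupv]; ring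
  have hvv : (inner ℝ v v : ℝ) = 1 := by
    have hpp : (inner ℝ (perp2 u) (perp2 u) : ℝ) = 1 := by
      rw [inner_two, perp2_zero, perp2_one]
      have := coord_sq u hu
      linarith
    by_cases hcase : (0:ℝ) ≤ inner ℝ (perp2 u) (z - o)
    · rw [hvdef, if_pos hcase]; exact hpp
    · rw [hvdef, if_neg hcase, inner_neg_left, inner_neg_right, hpp]; ring
  -- coordinates of z
  obtain ⟨a, hadef⟩ : ∃ a : ℝ, a = inner ℝ u (z - o) := ⟨_, rfl⟩
  obtain ⟨b, hbdef⟩ : ∃ b : ℝ, b = inner ℝ v (z - o) := ⟨_, rfl⟩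
  have hz2 : a ^ 2 + b ^ 2 = R ^ 2 := by
    have h := hpar (z - o) (z - o)
    rw [real_inner_self_eq_norm_sq, ← dist_eq_norm, hzR, ← hadef, ← hbdef] at h
    linarith [h]
  -- the vector W
  obtain ⟨Wu, hWu⟩ : ∃ Wu : ℝ, Wu = b * (2 * t' ^ 2 - R ^ 2) + 2 * a * t' * m' := ⟨_, rfl⟩
  obtain ⟨Wv, hWv⟩ : ∃ Wv : ℝ, Wv = a * (R ^ 2 - 2 * t' ^ 2) + 2 * b * t' * m' := ⟨_, rfl⟩
  obtain ⟨W, hWdef⟩ : ∃ W, W = Wu • u + Wv • v := ⟨_, rfl⟩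
  have hiW : ∀ p : EuclideanSpace ℝ (Fin 2),
      (inner ℝ W p : ℝ) = Wu * (inner ℝ u p : ℝ) + Wv * (inner ℝ v p : ℝ) := by
    intro p
    rw [hWdef, inner_add_left, real_inner_smul_left, real_inner_smul_left]
  have hvu : (inner ℝ v u : ℝ) = 0 := by rw [real_inner_comm]; exact huv
  have hiWu : (inner ℝ u W : ℝ) = Wu := by
    rw [real_inner_comm, hiW u, huu, hvu]; ring
  have hiWv : (inner ℝ v W : ℝ) = Wv := by
    rw [real_inner_comm, hiW v, huv, hvv]; ring
  have hWW : (inner ℝ W W : ℝ) = Wu ^ 2 + Wv ^ 2 := by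
    rw [hpar W W, hiWu, hiWv]; ring
  have hW2 : Wu ^ 2 + Wv ^ 2 = (R ^ 3) ^ 2 := by
    rw [hWu, hWv]
    linear_combination ((2 * t' ^ 2 - R ^ 2) ^ 2 + 4 * t' ^ 2 * m' ^ 2) * hz2
      + 4 * R ^ 2 * t' ^ 2 * hm2
  have hR3 : 0 < R ^ 3 := by positivity
  have hWnorm : ‖W‖ = R ^ 3 := by
    have h := real_inner_self_eq_norm_sq W
    rw [hWW, hW2] at h
    have h2 : Real.sqrt ((R ^ 3) ^ 2) = Real.sqrt (‖W‖ ^ 2) := by rw [h]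
    rw [Real.sqrt_sq hR3.le, Real.sqrt_sq (norm_nonneg W)] at h2
    exact h2.symm
  obtain ⟨w, hwdef⟩ : ∃ w, w = (R ^ 3)⁻¹ • W := ⟨_, rfl⟩
  have hwn : ‖w‖ = 1 := by
    rw [hwdef, norm_smul, hWnorm, norm_inv, Real.norm_eq_abs, abs_of_pos hR3]
    field_simp
  -- far point in direction w
  obtain ⟨q, hqQ, hqR, hqw⟩ := far_point Q hQc hQne o R henc hmin w hwn
  obtain ⟨c, hcdef⟩ : ∃ c : ℝ, c = inner ℝ u (q - o) := ⟨_, rfl⟩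
  obtain ⟨d, hddef⟩ : ∃ d : ℝ, d = inner ℝ v (q - o) := ⟨_, rfl⟩
  have hq2 : c ^ 2 + d ^ 2 = R ^ 2 := by
    have h := hpar (q - o) (q - o)
    rw [real_inner_self_eq_norm_sq, ← dist_eq_norm, hqR, ← hcdef, ← hddef] at h
    linarith [h]
  have hwcond : Wu * c + Wv * d ≤ 0 := by
    have h1 : (inner ℝ w (q - o) : ℝ) = (R ^ 3)⁻¹ * (Wu * c + Wv * d) := by
      rw [hwdef, real_inner_smul_left, hiW, ← hcdef, ← hddef]
    rw [h1] at hqw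
    by_contra hcon
    push_neg at hcon
    linarith [mul_pos (inv_pos.2 hR3) hcon]
  -- apply the core inequality
  have hat : a ≤ t := by rw [hadef]; exact (hQt z hzQ).le
  have hct : c ≤ t := by rw [hcdef]; exact (hQt q hqQ).le
  have ha0' : 0 ≤ a := by rw [hadef]; exact ha0
  have hb0' : 0 ≤ b := by rw [hbdef]; exact hb0
  have hcore : a * c + b * d ≤ 2 * t' ^ 2 - R ^ 2 := by
    apply core_ineq R t t' m' a b c d hRpos ht0.le htt' ht'R hm2 hm0 hz2 hq2 hat ha0' hb0' hct
    rw [← hWu, ← hWv]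
    exact hwcond
  -- distance between z and q
  have hzq : dist z q ^ 2 = 2 * R ^ 2 - 2 * (a * c + b * d) := by
    rw [dist_eq_norm, show z - q = (z - o) - (q - o) by abel, norm_sub_sq_real]
    have e1 : ‖z - o‖ ^ 2 = R ^ 2 := by rw [← dist_eq_norm, hzR]
    have e2 : ‖q - o‖ ^ 2 = R ^ 2 := by rw [← dist_eq_norm, hqR]
    rw [e1, e2, hpar (z - o) (q - o), ← hadef, ← hbdef, ← hcdef, ← hddef]
    ring
  have hdD : dist z q ≤ D := by
    rw [hD]; exact Metric.dist_le_diam_of_mem hQc.isBounded hzQ hqQ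
  have hD2 : dist z q ^ 2 ≤ D ^ 2 := pow_le_pow_left₀ dist_nonneg hdD 2
  have ht'2 : t' ^ 2 < s ^ 2 := by linarith [mul_self_lt_mul_self ht'0.le ht's]
  linarith [hcore, hzq, hD2, hs2, ht'2]
end

section
/- Define f(x,y) = (2/3)·(x³+y³)/(x²+y²). Subject to the constraints √(R² − D²/4) ≤ y ≤ x ≤ R ≤ D/√3 and x + y ≤ D (for some R, with D > 0 fixed), one has f(x,y) ≤ (2(4−√3)/13)·D. -/
open Real

set_option maxHeartbeats 1000000 in
private lemma key_ud (u d D s : ℝ) (hD : 0 < D) (hu : 0 < u) (hd : 0 ≤ d)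
    (hs2 : s ^ 2 = 3) (hs1 : 1 < s) (hslt : s < 2)
    (huD : u ≤ D) (hdu : d * u ≤ D ^ 2 / 4) (hsd : s * d ≤ 2 * D - s * u) :
    d ^ 2 * (39 * u - (24 - 6 * s) * D) ≤ u ^ 2 * ((24 - 6 * s) * D - 13 * u) := by
  have hs0 : 0 < s := by linarith
  rcases le_or_gt (39 * u) ((24 - 6 * s) * D) with hc | hc
  · have h13 : 13 * u ≤ (24 - 6 * s) * D := by linarith
    nlinarith [mul_nonneg (sq_nonneg d) (by linarith : (0:ℝ) ≤ (24 - 6 * s) * D - 39 * u),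
      mul_nonneg (sq_nonneg u) (by linarith : (0:ℝ) ≤ (24 - 6 * s) * D - 13 * u)]
  · have ha : (0:ℝ) ≤ 39 * u - (24 - 6 * s) * D := by linarith
    rcases le_or_gt (3 * D) (2 * s * u) with hb | hb
    · -- cubic case
      have h2D : 0 ≤ 2 * D - s * u := by nlinarith
      have hsd0 : 0 ≤ s * d := mul_nonneg hs0.le hd
      have h3d : (s * d) * (s * d) ≤ (2 * D - s * u) * (2 * D - s * u) :=
        mul_le_mul hsd hsd hsd0 h2D
      have h3d' : 3 * d ^ 2 = (s * d) * (s * d) := by linear_combination (-(d ^ 2)) * hs2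
      have hDu : (0:ℝ) ≤ D - u := by linarith
      have hb2 : (0:ℝ) ≤ 2 * s * u - 3 * D := by linarith
      have h33 : (0:ℝ) ≤ 33 - 18 * s := by nlinarith
      have main2a : 3 * (u ^ 2 * ((24 - 6 * s) * D - 13 * u)) - 3 * (d ^ 2 * (39 * u - (24 - 6 * s) * D))
          = (D - u) * (13 * (2 * s * u - 3 * D) ^ 2 + (2 * s + 18) * D * (2 * s * u - 3 * D)
              + (33 - 18 * s) * D ^ 2)
            + (((2 * D - s * u) * (2 * D - s * u)) - 3 * d ^ 2) * (39 * u - (24 - 6 * s) * D) := by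
        linear_combination (20 * u * D ^ 2 - 24 * u ^ 2 * D - 6 * u ^ 2 * D * s + 13 * u ^ 3) * hs2
      have n1 : 0 ≤ (D - u) * (13 * (2 * s * u - 3 * D) ^ 2 + (2 * s + 18) * D * (2 * s * u - 3 * D)
              + (33 - 18 * s) * D ^ 2) := by
        apply mul_nonneg hDu
        have p1 : (0:ℝ) ≤ 13 * (2 * s * u - 3 * D) ^ 2 := by positivity
        have p2 : (0:ℝ) ≤ (2 * s + 18) * D * (2 * s * u - 3 * D) :=
          mul_nonneg (mul_nonneg (by linarith) hD.le) hb2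
        have p3 : (0:ℝ) ≤ (33 - 18 * s) * D ^ 2 := mul_nonneg h33 (sq_nonneg D)
        linarith
      have n2 : 0 ≤ (((2 * D - s * u) * (2 * D - s * u)) - 3 * d ^ 2) * (39 * u - (24 - 6 * s) * D) :=
        mul_nonneg (by linarith) ha
      linarith [main2a, n1, n2]
    · -- quintic case
      have hB : (0:ℝ) ≤ 3 * D - 2 * s * u := by linarith
      have g1 : 0 ≤ (s*u - D)^2 * D * ((39*u - (24-6*s)*D)) * ((3*D - 2*s*u)) :=
        mul_nonneg (mul_nonneg (mul_nonneg (sq_nonneg _) hD.le) ha) hB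
      have g2 : 0 ≤ s * (u^2 * ((39*u - (24-6*s)*D))^2 * ((3*D - 2*s*u))) :=
        mul_nonneg hs0.le (mul_nonneg (mul_nonneg (sq_nonneg u) (sq_nonneg _)) hB)
      have g3 : 0 ≤ (3*u - 2*D)^2 * D * ((39*u - (24-6*s)*D))^2 :=
        mul_nonneg (mul_nonneg (sq_nonneg _) hD.le) (sq_nonneg _)
      have g4 : 0 ≤ (2*u - D)^2 * D * ((3*D - 2*s*u))^2 :=
        mul_nonneg (mul_nonneg (sq_nonneg _) hD.le) (sq_nonneg _)
      have g5 : 0 ≤ u^3 * ((3*D - 2*s*u))^2 := mul_nonneg (by positivity) (sq_nonneg _)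
      have g6 : 0 ≤ (s*u - D)^2 * D^2 * ((3*D - 2*s*u)) :=
        mul_nonneg (mul_nonneg (sq_nonneg _) (sq_nonneg D)) hB
      have g7 : 0 ≤ u^2 * D * ((3*D - 2*s*u))^2 :=
        mul_nonneg (mul_nonneg (sq_nonneg u) hD.le) (sq_nonneg _)
      have g8 : 0 ≤ (2*u - D)^2 * u * D * ((3*D - 2*s*u)) :=
        mul_nonneg (mul_nonneg (mul_nonneg (sq_nonneg _) hu.le) hD.le) hB
      have g9 : 0 ≤ (s*u - D)^2 * D * ((39*u - (24-6*s)*D))^2 :=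
        mul_nonneg (mul_nonneg (sq_nonneg _) hD.le) (sq_nonneg _)
      have g10 : 0 ≤ (2*u - D)^2 * D * ((39*u - (24-6*s)*D)) * ((3*D - 2*s*u)) :=
        mul_nonneg (mul_nonneg (mul_nonneg (sq_nonneg _) hD.le) ha) hB
      have g11 : 0 ≤ u * D * ((3*D - 2*s*u))^3 := by
        have : (0:ℝ) ≤ (3*D - 2*s*u)^3 := pow_nonneg hB 3
        exact mul_nonneg (mul_nonneg hu.le hD.le) this
      have main2b : 16 * u ^ 4 * ((24 - 6 * s) * D - 13 * u) - D ^ 4 * (39 * u - (24 - 6 * s) * D)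
          = (61306/24955073) * ((s*u - D)^2 * D * ((39*u - (24-6*s)*D)) * ((3*D - 2*s*u)))
          + (9505868/374326095) * (s * (u^2 * ((39*u - (24-6*s)*D))^2 * ((3*D - 2*s*u))))
          + (1252/258453) * ((3*u - 2*D)^2 * D * ((39*u - (24-6*s)*D))^2)
          + (649754/1919621) * ((2*u - D)^2 * D * ((3*D - 2*s*u))^2)
          + (56991818/28794315) * (u^3 * ((3*D - 2*s*u))^2)
          + (4655138/1919621) * ((s*u - D)^2 * D^2 * ((3*D - 2*s*u)))
          + (3192128/9598105) * (u^2 * D * ((3*D - 2*s*u))^2)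
          + (260451463/19196210) * ((2*u - D)^2 * u * D * ((3*D - 2*s*u)))
          + (692/258453) * ((s*u - D)^2 * D * ((39*u - (24-6*s)*D))^2)
          + (426203/24955073) * ((2*u - D)^2 * D * ((39*u - (24-6*s)*D)) * ((3*D - 2*s*u)))
          + (1895593/19196210) * (u * D * ((3*D - 2*s*u))^3) := by
        linear_combination (-(22800/28717)*D^5 + (463708/530959)*u*D^4 + (5536/28717)*u*D^4*s
          + (288225354/124775365)*u^2*D^3 - (258869828/124775365)*u^2*D^3*s
          - (2768/28717)*u^2*D^3*s^2 + (59472924/9598105)*u^3*D^2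
          - (1391022636/124775365)*u^3*D^2*s + (21074472/11343215)*u^3*D^2*s^2
          - (233924/2209)*u^4*D + (237562384/9598105)*u^4*D*s + (208/3)*u^5) * hs2
      have hq : D ^ 4 * (39 * u - (24 - 6 * s) * D) ≤ 16 * u ^ 4 * ((24 - 6 * s) * D - 13 * u) := by
        linarith [main2b, g1, g2, g3, g4, g5, g6, g7, g8, g9, g10, g11]
      have h4du : 4 * (d * u) ≤ D ^ 2 := by linarith
      have h16 : (4 * (d * u)) * (4 * (d * u)) ≤ D ^ 2 * D ^ 2 :=
        mul_le_mul h4du h4du (by positivity) (sq_nonneg D)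
      have h16' : 16 * d ^ 2 * u ^ 2 ≤ D ^ 4 := by nlinarith [h16]
      have step : 16 * d ^ 2 * u ^ 2 * (39 * u - (24 - 6 * s) * D)
          ≤ D ^ 4 * (39 * u - (24 - 6 * s) * D) := mul_le_mul_of_nonneg_right h16' ha
      have key16 : (16 * u ^ 2) * (d ^ 2 * (39 * u - (24 - 6 * s) * D))
          ≤ (16 * u ^ 2) * (u ^ 2 * ((24 - 6 * s) * D - 13 * u)) := by nlinarith [step, hq]
      exact le_of_mul_le_mul_left key16 (by positivity)

/-- With `f(x,y) = (2/3)·(x³+y³)/(x²+y²)`, subject to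
`√(R² − D²/4) ≤ y ≤ x ≤ R ≤ D/√3` and `x + y ≤ D` (for some `R`, `D > 0`),
one has `f(x,y) ≤ (2(4−√3)/13)·D`. -/
theorem f_upper_bound (x y R D : ℝ) (hD : 0 < D) (hx : 0 < x) (hy : 0 < y) (hR : 0 < R)
    (h1 : Real.sqrt (R ^ 2 - D ^ 2 / 4) ≤ y) (h2 : y ≤ x) (h3 : x ≤ R)
    (h4 : R ≤ D / Real.sqrt 3) (h5 : x + y ≤ D) :
    2 / 3 * (x ^ 3 + y ^ 3) / (x ^ 2 + y ^ 2) ≤ 2 * (4 - Real.sqrt 3) / 13 * D := by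
  set s := Real.sqrt 3 with hs
  have hs2 : s ^ 2 = 3 := Real.sq_sqrt (by norm_num)
  have hs1 : 1 < s := by nlinarith [Real.sqrt_nonneg 3]
  have hslt : s < 2 := by nlinarith [Real.sqrt_nonneg 3]
  have hs0 : 0 < s := by linarith
  -- s * x ≤ D
  have hxs : s * x ≤ D := by
    have h4' : R * s ≤ D := by
      rw [div_eq_mul_inv] at h4
      calc R * s ≤ D * s⁻¹ * s := by nlinarith
        _ = D := by field_simp
    nlinarith
  -- y^2 ≥ x^2 - D^2/4
  have hy2 : x ^ 2 - D ^ 2 / 4 ≤ y ^ 2 := by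
    rcases le_or_gt (R ^ 2 - D ^ 2 / 4) 0 with h | h
    · nlinarith
    · have := Real.sq_sqrt h.le
      nlinarith [Real.sqrt_nonneg (R ^ 2 - D ^ 2 / 4)]
  have hxy2 : 0 < x ^ 2 + y ^ 2 := by positivity
  rw [div_le_iff₀ hxy2]
  have hu : 0 < x + y := by linarith
  have hd : 0 ≤ x - y := by linarith
  have hdu : (x - y) * (x + y) ≤ D ^ 2 / 4 := by nlinarith [hy2]
  have hsd : s * (x - y) ≤ 2 * D - s * (x + y) := by nlinarith [hxs]
  have key := key_ud (x + y) (x - y) D s hD hu hd hs2 hs1 hslt h5 hdu hsd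
  nlinarith [key]
end

section
/- For real numbers x, y, D > 0 with x + y = D, x ≥ y > 0, and x ≤ D/√3, the quantity (2/3)·(x³+y³)/(x²+y²) is at most (2(4−√3)/13)·D, with equality when x = D/√3 and y = (1 − 1/√3)D. -/
open Real

/-- For reals `x ≥ y > 0` with `x + y = D > 0` and `x ≤ D/√3`,
`(2/3)·(x³+y³)/(x²+y²) ≤ (2(4−√3)/13)·D`, with equality when `x = D/√3` and
`y = (1 − 1/√3)·D`. -/
theorem case1_inequality (D : ℝ) (hD : 0 < D) :
    (∀ x y : ℝ, 0 < y → y ≤ x → x + y = D → x ≤ D / Real.sqrt 3 →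
      2 / 3 * (x ^ 3 + y ^ 3) / (x ^ 2 + y ^ 2) ≤ 2 * (4 - Real.sqrt 3) / 13 * D) ∧
    2 / 3 * ((D / Real.sqrt 3) ^ 3 + ((1 - 1 / Real.sqrt 3) * D) ^ 3) /
        ((D / Real.sqrt 3) ^ 2 + ((1 - 1 / Real.sqrt 3) * D) ^ 2) =
      2 * (4 - Real.sqrt 3) / 13 * D := by
  have hs2 : Real.sqrt 3 ^ 2 = 3 := Real.sq_sqrt (by norm_num)
  have hs1 : 1 < Real.sqrt 3 := by nlinarith [Real.sqrt_nonneg 3]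
  have hs2' : Real.sqrt 3 < 2 := by nlinarith [Real.sqrt_nonneg 3]
  have hspos : 0 < Real.sqrt 3 := by linarith
  constructor
  · intro x y hy hxy hsum hx
    have hx0 : 0 < x := lt_of_lt_of_le hy hxy
    have hden : 0 < x ^ 2 + y ^ 2 := by positivity
    rw [div_le_iff₀ hden]
    have hB : 0 ≤ D - x * Real.sqrt 3 := by
      rw [le_div_iff₀ hspos] at hx; linarith
    have hA : 0 ≤ x * Real.sqrt 3 - (Real.sqrt 3 - 1) * D := by
      nlinarith
    have hP : 0 ≤ D * ((x * Real.sqrt 3 - (Real.sqrt 3 - 1) * D) * (D - x * Real.sqrt 3)) :=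
      mul_nonneg hD.le (mul_nonneg hA hB)
    have hy' : y = D - x := by linarith
    subst hy'
    have key : 3 * (4 - Real.sqrt 3) * D * (x ^ 2 + (D - x) ^ 2) -
        13 * (x ^ 3 + (D - x) ^ 3) =
        D * (5 + 2 * Real.sqrt 3) *
          ((x * Real.sqrt 3 - (Real.sqrt 3 - 1) * D) * (D - x * Real.sqrt 3)) := by
      linear_combination (2 * D ^ 3 - D * (5 + 2 * Real.sqrt 3) * (x * D - x ^ 2)) * hs2
    have hP' : 0 ≤ D * (5 + 2 * Real.sqrt 3) *
        ((x * Real.sqrt 3 - (Real.sqrt 3 - 1) * D) * (D - x * Real.sqrt 3)) :=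
      mul_nonneg (mul_nonneg hD.le (by linarith)) (mul_nonneg hA hB)
    linarith [key ▸ hP']
  · have hne : Real.sqrt 3 ≠ 0 := ne_of_gt hspos
    have h3 : Real.sqrt 3 ^ 3 = 3 * Real.sqrt 3 := by
      rw [pow_succ, hs2]
    have h4 : Real.sqrt 3 ^ 4 = 9 := by
      have : Real.sqrt 3 ^ 4 = (Real.sqrt 3 ^ 2) ^ 2 := by ring
      rw [this, hs2]; norm_num
    have h5 : Real.sqrt 3 ^ 5 = 9 * Real.sqrt 3 := by
      have : Real.sqrt 3 ^ 5 = (Real.sqrt 3 ^ 2) ^ 2 * Real.sqrt 3 := by ring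
      rw [this, hs2]; norm_num
    have h6 : Real.sqrt 3 ^ 6 = 27 := by
      have : Real.sqrt 3 ^ 6 = (Real.sqrt 3 ^ 2) ^ 3 := by ring
      rw [this, hs2]; norm_num
    have hden : (D / Real.sqrt 3) ^ 2 + ((1 - 1 / Real.sqrt 3) * D) ^ 2 ≠ 0 := by
      positivity
    field_simp
    ring_nf
    simp only [hs2, h3, h4, h5, h6]
    ring
end

section
/- Let S be the unit square and v one of its vertices. Then the average distance from v to points of S equals (√2 + ln(1+√2))/3, and for any point s ∈ S the average distance μ_S(s) is at most this value. -/
open MeasureTheory Metric Real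

lemma sqrt_poly_hasDerivAt (y x : ℝ) (h : x^2 + y^2 ≠ 0) :
    HasDerivAt (fun x => Real.sqrt (x^2 + y^2)) (x / Real.sqrt (x^2 + y^2)) x := by
  have h1 : HasDerivAt (fun x : ℝ => x^2 + y^2) (2*x) x := by
    simpa using ((hasDerivAt_pow 2 x).add_const (y^2))
  have := (Real.hasDerivAt_sqrt h).comp x h1
  refine this.congr_deriv (Eq.symm ?_)
  have hs : Real.sqrt (x^2+y^2) > 0 := Real.sqrt_pos.2 (lt_of_le_of_ne (by positivity) (Ne.symm h))
  field_simp

lemma inner_ftc (y : ℝ) (hy : 0 ≤ y) :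
    ∫ x in (0:ℝ)..1, Real.sqrt (x^2 + y^2)
      = (Real.sqrt (1+y^2) + y^2 * Real.log (1 + Real.sqrt (1+y^2)) - y^2 * Real.log y) / 2 := by
  rcases eq_or_lt_of_le hy with h0 | hy
  · subst h0
    simp only [ne_eq, OfNat.ofNat_ne_zero, not_false_eq_true, zero_pow, add_zero]
    rw [show (∫ x in (0:ℝ)..1, Real.sqrt (x^2)) = ∫ x in (0:ℝ)..1, x from
      intervalIntegral.integral_congr (fun x hx => by
        rw [Set.uIcc_of_le (by norm_num)] at hx
        rw [Real.sqrt_sq hx.1])]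
    norm_num
  · -- y > 0
    set A : ℝ → ℝ := fun x => (x * Real.sqrt (x^2+y^2) + y^2 * Real.log (x + Real.sqrt (x^2+y^2))) / 2 with hA
    have key : ∀ x : ℝ, HasDerivAt A (Real.sqrt (x^2+y^2)) x := by
      intro x
      have hpos : 0 < x^2 + y^2 := by positivity
      have hs : 0 < Real.sqrt (x^2+y^2) := Real.sqrt_pos.2 hpos
      have hxs : 0 < x + Real.sqrt (x^2+y^2) := by
        rcases le_or_gt 0 x with hx | hx
        · positivity
        · have : -x < Real.sqrt (x^2+y^2) := by
            calc -x = Real.sqrt ((-x)^2) := by rw [Real.sqrt_sq (by linarith)]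
            _ < Real.sqrt (x^2 + y^2) := by
                apply Real.sqrt_lt_sqrt (by positivity); nlinarith
          linarith
      have hsq : HasDerivAt (fun x => Real.sqrt (x^2+y^2)) (x / Real.sqrt (x^2+y^2)) x :=
        sqrt_poly_hasDerivAt y x hpos.ne'
      have h1 : HasDerivAt (fun x => x * Real.sqrt (x^2+y^2))
          (1 * Real.sqrt (x^2+y^2) + x * (x / Real.sqrt (x^2+y^2))) x := by
        simpa using (hasDerivAt_id x).fun_mul hsq
      have h2 : HasDerivAt (fun x => x + Real.sqrt (x^2+y^2)) (1 + x / Real.sqrt (x^2+y^2)) x := by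
        simpa using (hasDerivAt_id x).fun_add hsq
      have h3 : HasDerivAt (fun x => Real.log (x + Real.sqrt (x^2+y^2)))
          ((x + Real.sqrt (x^2+y^2))⁻¹ * (1 + x / Real.sqrt (x^2+y^2))) x :=
        by exact (Real.hasDerivAt_log hxs.ne').comp x h2
      have h4 := (h1.add (h3.const_mul (y^2))).div_const 2
      refine h4.congr_deriv (Eq.symm ?_)
      have hss : Real.sqrt (x^2+y^2) ^ 2 = x^2 + y^2 := Real.sq_sqrt hpos.le
      set s := Real.sqrt (x^2+y^2) with hsdef
      field_simp
      linear_combination (x + s) * hss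
    rw [intervalIntegral.integral_eq_sub_of_hasDerivAt (fun x _ => key x)
      ((Continuous.intervalIntegrable (by continuity) _ _))]
    have h0 : Real.sqrt ((0:ℝ)^2 + y^2) = y := by
      rw [show (0:ℝ)^2 + y^2 = y^2 by ring, Real.sqrt_sq hy.le]
    simp only [hA]
    rw [h0, show (1:ℝ)^2 + y^2 = 1 + y^2 by ring, zero_add]
    ring

lemma sqrt_one_add_hasDerivAt (y : ℝ) :
    HasDerivAt (fun y => Real.sqrt (1 + y^2)) (y / Real.sqrt (1 + y^2)) y := by
  have h1 : HasDerivAt (fun y : ℝ => 1 + y^2) (2*y) y := by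
    simpa using ((hasDerivAt_pow 2 y).const_add 1)
  have hpos : (0:ℝ) < 1 + y^2 := by positivity
  have := (Real.hasDerivAt_sqrt hpos.ne').comp y h1
  refine this.congr_deriv (Eq.symm ?_)
  have hs : Real.sqrt (1+y^2) > 0 := Real.sqrt_pos.2 hpos
  field_simp

set_option maxHeartbeats 1000000 in
lemma outer_ftc :
    ∫ y in (0:ℝ)..1, (Real.sqrt (1+y^2) + y^2 * Real.log (1 + Real.sqrt (1+y^2)) - y^2 * Real.log y) / 2
      = (Real.sqrt 2 + Real.log (1 + Real.sqrt 2)) / 3 := by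
  set G : ℝ → ℝ := fun y => (1/2) * ((2/3) * (y * Real.sqrt (1+y^2)) + (1/3) * Real.log (y + Real.sqrt (1+y^2))
      + (y^3/3) * Real.log (1 + Real.sqrt (1+y^2)) - (y^3/3) * Real.log y) with hG
  have hspos : ∀ y : ℝ, 0 < Real.sqrt (1+y^2) := fun y => Real.sqrt_pos.2 (by positivity)
  have hys : ∀ y : ℝ, 0 < y + Real.sqrt (1+y^2) := by
    intro y
    have h1 : |y| < Real.sqrt (1+y^2) := by
      rw [show |y| = Real.sqrt (y^2) by rw [Real.sqrt_sq_eq_abs]]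
      exact Real.sqrt_lt_sqrt (by positivity) (by linarith)
    cases abs_cases y with
    | inl h => linarith [h.1, h1]
    | inr h => linarith [h.1, h1]
  have hGcont : Continuous G := by
    have e1 : Continuous fun y : ℝ => Real.log (y + Real.sqrt (1+y^2)) := by
      apply Continuous.log (by continuity)
      intro y; exact (hys y).ne'
    have e2 : Continuous fun y : ℝ => Real.log (1 + Real.sqrt (1+y^2)) := by
      apply Continuous.log (by continuity)
      intro y; positivity
    have e3 : Continuous fun y : ℝ => (y^3/3) * Real.log y := by
      have : (fun y : ℝ => (y^3/3) * Real.log y) = fun y : ℝ => (y^2/3) * (y * Real.log y) := by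
        funext y; ring
      rw [this]
      exact (by continuity : Continuous fun y : ℝ => y^2/3).mul Real.continuous_mul_log
    rw [hG]
    apply Continuous.mul continuous_const
    apply Continuous.sub
    apply Continuous.add
    apply Continuous.add
    · continuity
    · exact continuous_const.mul e1
    · exact (by continuity : Continuous fun y : ℝ => y^3/3).mul e2
    · exact e3
  have key : ∀ y ∈ Set.Ioo (0:ℝ) 1, HasDerivAt G
      ((Real.sqrt (1+y^2) + y^2 * Real.log (1 + Real.sqrt (1+y^2)) - y^2 * Real.log y) / 2) y := by
    intro y hy
    obtain ⟨hy0, hy1⟩ := hy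
    have hs := hspos y
    have hsd := sqrt_one_add_hasDerivAt y
    have hss : Real.sqrt (1+y^2) ^ 2 = 1 + y^2 := Real.sq_sqrt (by positivity)
    have t1 : HasDerivAt (fun y => y * Real.sqrt (1+y^2))
        (1 * Real.sqrt (1+y^2) + y * (y / Real.sqrt (1+y^2))) y := by
      simpa using (hasDerivAt_id y).fun_mul hsd
    have t2 : HasDerivAt (fun y => Real.log (y + Real.sqrt (1+y^2)))
        ((y + Real.sqrt (1+y^2))⁻¹ * (1 + y / Real.sqrt (1+y^2))) y := by
      have h2 : HasDerivAt (fun y => y + Real.sqrt (1+y^2)) (1 + y / Real.sqrt (1+y^2)) y := by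
        simpa using (hasDerivAt_id y).fun_add hsd
      exact (Real.hasDerivAt_log (hys y).ne').comp y h2
    have hc : HasDerivAt (fun y : ℝ => y^3/3) (y^2) y := by
      have := (hasDerivAt_pow 3 y).div_const 3
      simpa using this
    have t3 : HasDerivAt (fun y => (y^3/3) * Real.log (1 + Real.sqrt (1+y^2)))
        (y^2 * Real.log (1 + Real.sqrt (1+y^2)) + (y^3/3) * ((1 + Real.sqrt (1+y^2))⁻¹ * (y / Real.sqrt (1+y^2)))) y := by
      have h2 : HasDerivAt (fun y => 1 + Real.sqrt (1+y^2)) (y / Real.sqrt (1+y^2)) y := by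
        simpa using hsd.const_add 1
      have h3 : HasDerivAt (fun y => Real.log (1 + Real.sqrt (1+y^2)))
          ((1 + Real.sqrt (1+y^2))⁻¹ * (y / Real.sqrt (1+y^2))) y :=
        (Real.hasDerivAt_log (by positivity)).comp y h2
      exact hc.mul h3
    have t4 : HasDerivAt (fun y => (y^3/3) * Real.log y)
        (y^2 * Real.log y + (y^3/3) * y⁻¹) y :=
      hc.mul (Real.hasDerivAt_log hy0.ne')
    have h4 := ((((t1.const_mul ((2:ℝ)/3)).add (t2.const_mul ((1:ℝ)/3))).add t3).sub t4).const_mul ((1:ℝ)/2)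
    refine h4.congr_deriv (Eq.symm ?_)
    set s := Real.sqrt (1+y^2) with hsdef
    have hys' := hys y
    field_simp
    linear_combination (y + s) * (1 + s + y^2) * hss
  have hint : IntervalIntegrable (fun y : ℝ =>
      (Real.sqrt (1+y^2) + y^2 * Real.log (1 + Real.sqrt (1+y^2)) - y^2 * Real.log y) / 2) volume 0 1 := by
    apply Continuous.intervalIntegrable
    have e2 : Continuous fun y : ℝ => Real.log (1 + Real.sqrt (1+y^2)) := by
      apply Continuous.log (by continuity)
      intro y; positivity
    have e3 : Continuous fun y : ℝ => y^2 * Real.log y := by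
      have : (fun y : ℝ => y^2 * Real.log y) = fun y : ℝ => y * (y * Real.log y) := by
        funext y; ring
      rw [this]
      exact continuous_id.mul Real.continuous_mul_log
    have esq : Continuous fun y : ℝ => Real.sqrt (1+y^2) :=
      Real.continuous_sqrt.comp (continuous_const.add (continuous_pow 2))
    exact ((esq.add ((continuous_pow 2).mul e2)).sub e3).div_const 2
  rw [intervalIntegral.integral_eq_sub_of_hasDerivAt_of_le (by norm_num) hGcont.continuousOn key hint]
  have h1 : Real.sqrt (1 + (1:ℝ)^2) = Real.sqrt 2 := by norm_num
  have h0 : Real.sqrt (1 + (0:ℝ)^2) = 1 := by norm_num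
  rw [hG]
  simp only [h1, h0]
  norm_num [Real.log_one]
  ring

lemma sym1 (c : ℝ) (hc : c = 0 ∨ c = 1) (g : ℝ → ℝ) :
    ∫ x in (0:ℝ)..1, g ((c-x)^2) = ∫ x in (0:ℝ)..1, g (x^2) := by
  rcases hc with rfl | rfl
  · apply intervalIntegral.integral_congr
    intro x _
    dsimp only
    rw [show (0-x)^2 = x^2 by ring]
  · have := intervalIntegral.integral_comp_sub_left (a := (0:ℝ)) (b := 1) (fun t => g (t^2)) 1
    norm_num at this
    exact this

lemma core :
    ∫ x in (0:ℝ)..1, ∫ y in (0:ℝ)..1, Real.sqrt (x^2 + y^2)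
      = (Real.sqrt 2 + Real.log (1 + Real.sqrt 2)) / 3 := by
  rw [← outer_ftc]
  apply intervalIntegral.integral_congr
  intro x hx
  rw [Set.uIcc_of_le (by norm_num)] at hx
  have h1 : ∫ y in (0:ℝ)..1, Real.sqrt (x^2 + y^2) = ∫ y in (0:ℝ)..1, Real.sqrt (y^2 + x^2) := by
    apply intervalIntegral.integral_congr
    intro y _
    dsimp only
    rw [show x^2 + y^2 = y^2 + x^2 by ring]
  dsimp only
  rw [h1, inner_ftc x hx.1]

lemma vertexI (c d : ℝ) (hc : c = 0 ∨ c = 1) (hd : d = 0 ∨ d = 1) :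
    ∫ x in (0:ℝ)..1, ∫ y in (0:ℝ)..1, Real.sqrt ((c-x)^2 + (d-y)^2)
      = (Real.sqrt 2 + Real.log (1 + Real.sqrt 2)) / 3 := by
  have inner_eq : ∀ x : ℝ, ∫ y in (0:ℝ)..1, Real.sqrt ((c-x)^2 + (d-y)^2)
      = ∫ y in (0:ℝ)..1, Real.sqrt ((c-x)^2 + y^2) :=
    fun x => sym1 d hd (fun u => Real.sqrt ((c-x)^2 + u))
  calc ∫ x in (0:ℝ)..1, ∫ y in (0:ℝ)..1, Real.sqrt ((c-x)^2 + (d-y)^2)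
      = ∫ x in (0:ℝ)..1, ∫ y in (0:ℝ)..1, Real.sqrt ((c-x)^2 + y^2) := by
        apply intervalIntegral.integral_congr
        intro x _; dsimp only; exact inner_eq x
    _ = ∫ x in (0:ℝ)..1, ∫ y in (0:ℝ)..1, Real.sqrt (x^2 + y^2) :=
        sym1 c hc (fun u => ∫ y in (0:ℝ)..1, Real.sqrt (u + y^2))
    _ = (Real.sqrt 2 + Real.log (1 + Real.sqrt 2)) / 3 := core

lemma transfer (S : Set (EuclideanSpace ℝ (Fin 2)))
    (hS : S = {p | p 0 ∈ Set.Icc (0:ℝ) 1 ∧ p 1 ∈ Set.Icc (0:ℝ) 1})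
    (w : EuclideanSpace ℝ (Fin 2)) :
    (∫ q in S, dist w q) = ∫ x in (0:ℝ)..1, ∫ y in (0:ℝ)..1,
      Real.sqrt ((w 0 - x)^2 + (w 1 - y)^2) := by
  classical
  set e : ℝ × ℝ ≃ᵐ EuclideanSpace ℝ (Fin 2) :=
    (MeasurableEquiv.finTwoArrow (α := ℝ)).symm.trans
      (MeasurableEquiv.toLp 2 (Fin 2 → ℝ)) with he
  have hmp : MeasurePreserving (⇑e) volume volume := by
    have h1 := (MeasureTheory.volume_preserving_finTwoArrow ℝ).symm MeasurableEquiv.finTwoArrow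
    have h2 := (EuclideanSpace.volume_preserving_symm_measurableEquiv_toLp (Fin 2)).symm
      (MeasurableEquiv.toLp 2 (Fin 2 → ℝ)).symm
    have := h2.comp h1
    rwa [show (⇑(MeasurableEquiv.toLp 2 (Fin 2 → ℝ)).symm.symm) ∘ (⇑(MeasurableEquiv.finTwoArrow (α := ℝ)).symm) = ⇑e
      from rfl] at this
  have hcoord : ∀ p : ℝ × ℝ, (e p) 0 = p.1 ∧ (e p) 1 = p.2 := by
    intro p
    constructor <;> rfl
  have hpre : e ⁻¹' S = Set.Icc (0:ℝ) 1 ×ˢ Set.Icc (0:ℝ) 1 := by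
    ext p
    simp only [hS, Set.mem_preimage, Set.mem_setOf_eq, (hcoord p).1, (hcoord p).2,
      Set.mem_prod]
  have := hmp.setIntegral_preimage_emb e.measurableEmbedding (fun q => dist w q) S
  rw [← this, hpre]
  have hdist : ∀ p : ℝ × ℝ, dist w (e p) = Real.sqrt ((w 0 - p.1)^2 + (w 1 - p.2)^2) := by
    intro p
    rw [EuclideanSpace.dist_eq, Fin.sum_univ_two, (hcoord p).1, (hcoord p).2,
      Real.dist_eq, Real.dist_eq, sq_abs, sq_abs]
  calc ∫ p in Set.Icc (0:ℝ) 1 ×ˢ Set.Icc (0:ℝ) 1, dist w (e p)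
      = ∫ p in Set.Icc (0:ℝ) 1 ×ˢ Set.Icc (0:ℝ) 1,
          Real.sqrt ((w 0 - p.1)^2 + (w 1 - p.2)^2) := by
        apply setIntegral_congr_fun (by measurability)
        intro p _; exact hdist p
    _ = ∫ x in Set.Icc (0:ℝ) 1, ∫ y in Set.Icc (0:ℝ) 1,
          Real.sqrt ((w 0 - x)^2 + (w 1 - y)^2) := by
        apply setIntegral_prod
        apply ContinuousOn.integrableOn_compact (isCompact_Icc.prod isCompact_Icc)
        apply Continuous.continuousOn
        apply Real.continuous_sqrt.comp
        apply Continuous.add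
        · exact ((continuous_const.sub continuous_fst).pow 2)
        · exact ((continuous_const.sub continuous_snd).pow 2)
    _ = ∫ x in (0:ℝ)..1, ∫ y in (0:ℝ)..1, Real.sqrt ((w 0 - x)^2 + (w 1 - y)^2) := by
        rw [intervalIntegral.integral_of_le (by norm_num : (0:ℝ) ≤ 1),
          ← integral_Icc_eq_integral_Ioc]
        apply setIntegral_congr_fun measurableSet_Icc
        intro x _
        dsimp only
        rw [intervalIntegral.integral_of_le (by norm_num : (0:ℝ) ≤ 1),
          ← integral_Icc_eq_integral_Ioc]

lemma S_compact (S : Set (EuclideanSpace ℝ (Fin 2)))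
    (hS : S = {p | p 0 ∈ Set.Icc (0:ℝ) 1 ∧ p 1 ∈ Set.Icc (0:ℝ) 1}) : IsCompact S := by
  rw [hS]
  apply Metric.isCompact_of_isClosed_isBounded
  · have c0 : Continuous (fun p : EuclideanSpace ℝ (Fin 2) => p 0) := (continuous_apply 0).comp (PiLp.continuous_ofLp 2 _)
    have c1 : Continuous (fun p : EuclideanSpace ℝ (Fin 2) => p 1) := (continuous_apply 1).comp (PiLp.continuous_ofLp 2 _)
    exact (isClosed_Icc.preimage c0).inter (isClosed_Icc.preimage c1)
  · rw [Metric.isBounded_iff_subset_closedBall 0]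
    refine ⟨2, fun p hp => ?_⟩
    obtain ⟨h0, h1⟩ := hp
    have : ‖p‖ ≤ 2 := by
      rw [EuclideanSpace.norm_eq, Fin.sum_univ_two]
      have e0 : ‖p 0‖^2 ≤ 1 := by
        rw [Real.norm_eq_abs, sq_abs]; nlinarith [h0.1, h0.2]
      have e1 : ‖p 1‖^2 ≤ 1 := by
        rw [Real.norm_eq_abs, sq_abs]; nlinarith [h1.1, h1.2]
      exact (Real.sqrt_le_left (by norm_num)).2 (by nlinarith)
    simpa [Metric.mem_closedBall, dist_zero_right] using this

lemma dist_integrable (S : Set (EuclideanSpace ℝ (Fin 2)))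
    (hS : S = {p | p 0 ∈ Set.Icc (0:ℝ) 1 ∧ p 1 ∈ Set.Icc (0:ℝ) 1})
    (w : EuclideanSpace ℝ (Fin 2)) : IntegrableOn (fun q => dist w q) S volume :=
  ContinuousOn.integrableOn_compact (S_compact S hS) (Continuous.continuousOn (continuous_const.dist continuous_id))

lemma seg (S : Set (EuclideanSpace ℝ (Fin 2)))
    (hS : S = {p | p 0 ∈ Set.Icc (0:ℝ) 1 ∧ p 1 ∈ Set.Icc (0:ℝ) 1})
    (x y : EuclideanSpace ℝ (Fin 2)) (t : ℝ) (ht0 : 0 ≤ t) (ht1 : t ≤ 1) :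
    (∫ q in S, dist ((1-t) • x + t • y) q)
      ≤ (1-t) * (∫ q in S, dist x q) + t * (∫ q in S, dist y q) := by
  have hle : ∀ q : EuclideanSpace ℝ (Fin 2),
      dist ((1-t) • x + t • y) q ≤ (1-t) * dist x q + t * dist y q := by
    intro q
    have : (1-t) • x + t • y - q = (1-t) • (x - q) + t • (y - q) := by
      module
    rw [dist_eq_norm, dist_eq_norm, dist_eq_norm, this]
    calc ‖(1-t) • (x - q) + t • (y - q)‖ ≤ ‖(1-t) • (x - q)‖ + ‖t • (y - q)‖ := norm_add_le _ _
      _ = (1-t) * ‖x - q‖ + t * ‖y - q‖ := by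
          rw [norm_smul, norm_smul, Real.norm_eq_abs, Real.norm_eq_abs,
            abs_of_nonneg (by linarith), abs_of_nonneg ht0]
  calc (∫ q in S, dist ((1-t) • x + t • y) q)
      ≤ ∫ q in S, ((1-t) * dist x q + t * dist y q) := by
        apply setIntegral_mono_on (dist_integrable S hS _)
        · exact (((dist_integrable S hS x).const_mul _).add ((dist_integrable S hS y).const_mul _))
        · exact (S_compact S hS).isClosed.measurableSet
        · intro q _; exact hle q
    _ = (1-t) * (∫ q in S, dist x q) + t * (∫ q in S, dist y q) := by
        rw [integral_add (((dist_integrable S hS x).const_mul _)) (((dist_integrable S hS y).const_mul _)),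
          integral_const_mul, integral_const_mul]

noncomputable def P (c d : ℝ) : EuclideanSpace ℝ (Fin 2) := WithLp.toLp 2 ![c, d]

lemma P_apply0 (c d : ℝ) : P c d 0 = c := rfl
lemma P_apply1 (c d : ℝ) : P c d 1 = d := rfl

lemma comb_apply (t : ℝ) (x y : EuclideanSpace ℝ (Fin 2)) (i : Fin 2) :
    ((1-t) • x + t • y) i = (1-t) * x i + t * y i := rfl

lemma decomp (x y : EuclideanSpace ℝ (Fin 2)) (t : ℝ) (z : EuclideanSpace ℝ (Fin 2))
    (h0 : z 0 = (1-t) * x 0 + t * y 0) (h1 : z 1 = (1-t) * x 1 + t * y 1) :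
    z = (1-t) • x + t • y := by
  ext i
  fin_cases i
  · rw [comb_apply]; exact h0
  · rw [comb_apply]; exact h1

/-- Let `S = [0,1]²` be the unit square and `v` one of its vertices. Then the average
distance from `v` to the points of `S` equals `(√2 + ln(1+√2))/3`, and for every point
`s ∈ S` the average distance `μ_S(s)` is at most this value (`area(S) = 1`). -/
theorem unit_square_avg_dist (S : Set (EuclideanSpace ℝ (Fin 2)))
    (hS : S = {p | p 0 ∈ Set.Icc (0:ℝ) 1 ∧ p 1 ∈ Set.Icc (0:ℝ) 1})
    (v : EuclideanSpace ℝ (Fin 2))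
    (hv : (v 0 = 0 ∨ v 0 = 1) ∧ (v 1 = 0 ∨ v 1 = 1)) :
    (∫ q in S, dist v q) = (Real.sqrt 2 + Real.log (1 + Real.sqrt 2)) / 3 ∧
    ∀ s ∈ S, (∫ q in S, dist s q) ≤ (Real.sqrt 2 + Real.log (1 + Real.sqrt 2)) / 3 := by
  have vertex_val : ∀ w : EuclideanSpace ℝ (Fin 2), (w 0 = 0 ∨ w 0 = 1) → (w 1 = 0 ∨ w 1 = 1) →
      (∫ q in S, dist w q) = (Real.sqrt 2 + Real.log (1 + Real.sqrt 2)) / 3 := by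
    intro w h0 h1
    rw [transfer S hS w]
    exact vertexI (w 0) (w 1) h0 h1
  refine ⟨vertex_val v hv.1 hv.2, ?_⟩
  intro s hs
  rw [hS] at hs
  obtain ⟨⟨ha0, ha1⟩, ⟨hb0, hb1⟩⟩ := hs
  set V := (Real.sqrt 2 + Real.log (1 + Real.sqrt 2)) / 3 with hV
  set a := s 0 with hadef
  set b := s 1 with hbdef
  -- edge points bounded by V
  have edge : ∀ c : ℝ, (c = 0 ∨ c = 1) → (∫ q in S, dist (P c b) q) ≤ V := by
    intro c hc
    have hdec : P c b = (1-b) • P c 0 + b • P c 1 := by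
      apply decomp
      · rw [P_apply0, P_apply0, P_apply0]; ring
      · rw [P_apply1, P_apply1, P_apply1]; ring
    rw [hdec]
    have h1 := seg S hS (P c 0) (P c 1) b hb0 hb1
    have e0 : (∫ q in S, dist (P c 0) q) = V := vertex_val _ (by rw [P_apply0]; exact hc) (by rw [P_apply1]; left; rfl)
    have e1 : (∫ q in S, dist (P c 1) q) = V := vertex_val _ (by rw [P_apply0]; exact hc) (by rw [P_apply1]; right; rfl)
    rw [e0, e1] at h1
    calc _ ≤ (1-b) * V + b * V := h1
      _ = V := by ring
  have hdec : s = (1-a) • P 0 b + a • P 1 b := by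
    apply decomp
    · rw [P_apply0, P_apply0]; ring
    · rw [P_apply1, P_apply1]; ring
  calc (∫ q in S, dist s q) = ∫ q in S, dist ((1-a) • P 0 b + a • P 1 b) q := by rw [← hdec]
    _ ≤ (1-a) * (∫ q in S, dist (P 0 b) q) + a * (∫ q in S, dist (P 1 b) q) :=
        seg S hS _ _ a ha0 ha1
    _ ≤ (1-a) * V + a * V := by
        have e0 := edge 0 (Or.inl rfl)
        have e1 := edge 1 (Or.inr rfl)
        have h1a : (0:ℝ) ≤ 1 - a := by linarith
        nlinarith
    _ = V := by ring
end
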